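/- arXiv:1008.0521 — 10 statements merged into one kernel-verified Lean document; each statement's English description precedes it below -/
import Mathlib

section
/- For every non-negative integer k there exists a Boolean function f on n = (2k+1)^2 variables with sensitivity s(f) = 2k+1 and block sensitivity bs(f) = (2k+1)(k+1). -/
def flipS {n : ℕ} (w : Fin n → Bool) (S : Finset (Fin n)) : Fin n → Bool :=
  fun i => if i ∈ S then !(w i) else w i

def sensAt {n : ℕ} (f : (Fin n → Bool) → Bool) (w : Fin n → Bool) : ℕ :=
  (Finset.univ.filter (fun i => f (flipS w {i}) ≠ f w)).card

def sens {n : ℕ} (f : (Fin n → Bool) → Bool) : ℕ :=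
  Finset.univ.sup (fun w => sensAt f w)

noncomputable def bsAt {n : ℕ} (f : (Fin n → Bool) → Bool) (w : Fin n → Bool) : ℕ :=
  sSup {k | ∃ B : Fin k → Finset (Fin n), (∀ j, (B j).Nonempty) ∧
    (∀ j₁ j₂, j₁ ≠ j₂ → Disjoint (B j₁) (B j₂)) ∧ (∀ j, f (flipS w (B j)) ≠ f w)}

noncomputable def bs {n : ℕ} (f : (Fin n → Bool) → Bool) : ℕ :=
  Finset.univ.sup (fun w => bsAt f w)

namespace SensProof

abbrev m (k : ℕ) : ℕ := 2 * k + 1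

variable (k : ℕ)

lemma m_pos : 0 < m k := Nat.succ_pos _

def idx (j p : Fin (m k)) : Fin ((m k) ^ 2) :=
  ⟨(j : ℕ) * m k + p, by
    have hj := j.isLt; have hp := p.isLt
    have h : (j : ℕ) * m k + p < m k * m k := by nlinarith
    simpa [pow_two] using h⟩

def blk (i : Fin ((m k) ^ 2)) : Fin (m k) :=
  ⟨(i : ℕ) / m k, by
    exact Nat.div_lt_of_lt_mul (Nat.lt_of_lt_of_eq i.isLt (pow_two (m k)))⟩

def pos (i : Fin ((m k) ^ 2)) : Fin (m k) :=
  ⟨(i : ℕ) % m k, Nat.mod_lt _ (m_pos k)⟩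

lemma blk_idx (j p : Fin (m k)) : blk k (idx k j p) = j := by
  apply Fin.ext
  simp only [blk, idx]
  rw [mul_comm, Nat.mul_add_div (m_pos k), Nat.div_eq_of_lt p.isLt, add_zero]

lemma pos_idx (j p : Fin (m k)) : pos k (idx k j p) = p := by
  apply Fin.ext
  simp only [pos, idx]
  rw [mul_comm, Nat.mul_add_mod, Nat.mod_eq_of_lt p.isLt]

lemma idx_blk_pos (i : Fin ((m k) ^ 2)) : idx k (blk k i) (pos k i) = i := by
  apply Fin.ext
  simp only [idx, blk, pos]
  rw [mul_comm]
  exact Nat.div_add_mod (i : ℕ) (m k)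

def ind (t : Fin (k + 1)) : Fin (m k) → Bool :=
  fun p => decide ((p : ℕ) = 2 * t ∨ (p : ℕ) = 2 * t + 1)

def res (w : Fin ((m k) ^ 2) → Bool) (j : Fin (m k)) : Fin (m k) → Bool :=
  fun p => w (idx k j p)

def F (w : Fin ((m k) ^ 2) → Bool) : Bool :=
  decide (∃ j : Fin (m k), ∃ t : Fin (k + 1), res k w j = ind k t)

lemma F_iff (w : Fin ((m k) ^ 2) → Bool) :
    F k w = true ↔ ∃ j : Fin (m k), ∃ t : Fin (k + 1), res k w j = ind k t := by
  simp [F]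

lemma aux (t s : Fin (k + 1)) (hts : (t : ℕ) ≠ (s : ℕ)) (htk : (t : ℕ) < k)
    (p q : Fin (m k))
    (h1 : ∀ r, r ≠ p → r ≠ q → ind k t r = ind k s r) : False := by
  have hm : m k = 2 * k + 1 := rfl
  have hs' := s.isLt
  have h1' : ∀ r : Fin (m k), ind k t r ≠ ind k s r → (r = p ∨ r = q) := by
    intro r h
    by_contra hc
    push_neg at hc
    exact h (h1 r hc.1 hc.2)
  have d1 := h1' ⟨2 * t, by omega⟩ (by
    simp only [ind, Ne, decide_eq_decide, Fin.val_mk, true_or, or_true, true_iff, iff_true]; omega)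
  have d2 := h1' ⟨2 * t + 1, by omega⟩ (by
    simp only [ind, Ne, decide_eq_decide, Fin.val_mk, true_or, or_true, true_iff, iff_true]; omega)
  have d3 := h1' ⟨2 * s, by omega⟩ (by
    simp only [ind, Ne, decide_eq_decide, Fin.val_mk, true_or, or_true, true_iff, iff_true]; omega)
  have e1 : 2 * (t : ℕ) = (p : ℕ) ∨ 2 * (t : ℕ) = (q : ℕ) :=
    d1.imp (fun h => congrArg Fin.val h) (fun h => congrArg Fin.val h)
  have e2 : 2 * (t : ℕ) + 1 = (p : ℕ) ∨ 2 * (t : ℕ) + 1 = (q : ℕ) :=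
    d2.imp (fun h => congrArg Fin.val h) (fun h => congrArg Fin.val h)
  have e3 : 2 * (s : ℕ) = (p : ℕ) ∨ 2 * (s : ℕ) = (q : ℕ) :=
    d3.imp (fun h => congrArg Fin.val h) (fun h => congrArg Fin.val h)
  omega

lemma two_flips (x : Fin (m k) → Bool) (p q : Fin (m k)) (hpq : p ≠ q)
    (t s : Fin (k + 1)) (ht : flipS x {p} = ind k t) (hs : flipS x {q} = ind k s) :
    False := by
  have hp : ind k t p = !x p := by rw [← ht]; simp [flipS]
  have hp' : ind k s p = x p := by rw [← hs]; simp [flipS, hpq]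
  have h1 : ∀ r, r ≠ p → r ≠ q → ind k t r = ind k s r := by
    intro r h h'
    rw [← ht, ← hs]
    simp [flipS, h, h']
  have hts : (t : ℕ) ≠ (s : ℕ) := by
    intro h
    have hteq : t = s := Fin.ext h
    subst hteq
    have := hp.symm.trans hp'
    simp at this
  rcases Nat.lt_or_ge (t : ℕ) k with h | h
  · exact aux k t s hts h p q h1
  · have hsk : (s : ℕ) < k := by have := t.isLt; have := s.isLt; omega
    exact aux k s t hts.symm hsk p q (fun r hr hr' => (h1 r hr hr').symm)

lemma res_flip_ne (w : Fin ((m k) ^ 2) → Bool) (S : Finset (Fin ((m k) ^ 2)))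
    (j : Fin (m k)) (h : ∀ p, idx k j p ∉ S) :
    res k (flipS w S) j = res k w j := by
  funext p
  simp [res, flipS, h p]

lemma res_flip_single (w : Fin ((m k) ^ 2) → Bool) (i : Fin ((m k) ^ 2)) :
    res k (flipS w {i}) (blk k i) = flipS (res k w (blk k i)) {pos k i} := by
  funext p
  simp only [res, flipS, Finset.mem_singleton]
  by_cases h : p = pos k i
  · subst h
    rw [idx_blk_pos]
    simp
  · have h2 : idx k (blk k i) p ≠ i := by
      intro e
      apply h
      have := pos_idx k (blk k i) p
      rw [e] at this
      exact this.symm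
    simp [h, h2]

lemma g_res_zero (j : Fin (m k)) (t : Fin (k + 1)) :
    res k (fun _ => false) j ≠ ind k t := by
  intro h
  have hm : m k = 2 * k + 1 := rfl
  have := congrFun h ⟨2 * t, by have := t.isLt; omega⟩
  simp [res, ind] at this

lemma F_zero : F k (fun _ => false) = false := by
  simp only [F, decide_eq_false_iff_not]
  rintro ⟨j, t, h⟩
  exact g_res_zero k j t h

lemma btrue {b : Bool} (h : b ≠ false) : b = true := by
  cases b
  · exact absurd rfl h
  · rfl

lemma sens_flip_block (w : Fin ((m k) ^ 2) → Bool) (i : Fin ((m k) ^ 2))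
    (hF : F k w = false) (hi : F k (flipS w {i}) = true) :
    ∃ t, flipS (res k w (blk k i)) {pos k i} = ind k t := by
  obtain ⟨j, t, h⟩ := (F_iff k _).mp hi
  have hj : j = blk k i := by
    by_contra hne
    have hnotin : ∀ p, idx k j p ∉ ({i} : Finset _) := by
      intro p hp
      rw [Finset.mem_singleton] at hp
      exact hne (by rw [← hp, blk_idx])
    rw [res_flip_ne k _ _ _ hnotin] at h
    have : F k w = true := (F_iff k _).mpr ⟨j, t, h⟩
    rw [hF] at this
    exact absurd this (by simp)
  subst hj
  rw [res_flip_single] at h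
  exact ⟨t, h⟩

lemma sens_upper (w : Fin ((m k) ^ 2) → Bool) : sensAt (F k) w ≤ m k := by
  rw [sensAt]
  rcases hF : F k w with _ | _
  · -- F w = false : blk is injective on the sensitive set
    have hinj : Set.InjOn (blk k)
        (Finset.univ.filter (fun i => F k (flipS w {i}) ≠ F k w) : Finset _) := by
      intro i hi i' hi' hb
      by_contra hne
      have h1 : F k (flipS w {i}) = true := by
        have := (Finset.mem_filter.mp (Finset.mem_coe.mp hi)).2
        rw [hF] at this
        exact btrue this
      have h2 : F k (flipS w {i'}) = true := by
        have := (Finset.mem_filter.mp (Finset.mem_coe.mp hi')).2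
        rw [hF] at this
        exact btrue this
      obtain ⟨t, ht⟩ := sens_flip_block k w i hF h1
      obtain ⟨t', ht'⟩ := sens_flip_block k w i' hF h2
      rw [← hb] at ht'
      have hpos : pos k i ≠ pos k i' := by
        intro e
        exact hne (by rw [← idx_blk_pos k i, ← idx_blk_pos k i', ← hb, ← e])
      exact two_flips k _ _ _ hpos t t' ht ht'
    have := Finset.card_le_card_of_injOn (blk k) (fun a _ => Finset.mem_univ (blk k a)) hinj
    simpa [hF] using this
  · -- F w = true : all sensitive coords live in one block
    obtain ⟨j0, t0, h0⟩ := (F_iff k _).mp hF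
    have hblk : ∀ i : Fin ((m k) ^ 2), F k (flipS w {i}) ≠ F k w → blk k i = j0 := by
      intro i hi
      by_contra hne
      have hnotin : ∀ p, idx k j0 p ∉ ({i} : Finset _) := by
        intro p hp
        rw [Finset.mem_singleton] at hp
        exact hne (by rw [← hp, blk_idx])
      have : F k (flipS w {i}) = true :=
        (F_iff k _).mpr ⟨j0, t0, by rw [res_flip_ne k _ _ _ hnotin, h0]⟩
      exact hi (this.trans hF.symm)
    have hinj : Set.InjOn (pos k)
        (Finset.univ.filter (fun i => F k (flipS w {i}) ≠ F k w) : Finset _) := by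
      intro i hi i' hi' hp
      have b1 := hblk i (Finset.mem_filter.mp (Finset.mem_coe.mp hi)).2
      have b2 := hblk i' (Finset.mem_filter.mp (Finset.mem_coe.mp hi')).2
      rw [← idx_blk_pos k i, ← idx_blk_pos k i', b1, b2, hp]
    have := Finset.card_le_card_of_injOn (pos k) (fun a _ => Finset.mem_univ (pos k a)) hinj
    simpa [hF] using this

lemma flip_zero_single (i : Fin ((m k) ^ 2)) :
    F k (flipS (fun _ => false) {i}) = true ↔ (i : ℕ) % m k = 2 * k := by
  have hm : m k = 2 * k + 1 := rfl
  constructor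
  · intro h
    obtain ⟨t, hjt⟩ := sens_flip_block k _ i (F_zero k) h
    have hval : ∀ (r : Fin (m k)), ind k t r = true → r = pos k i := by
      intro r hr
      have := congrFun hjt r
      rw [hr] at this
      simp only [flipS, res, Finset.mem_singleton] at this
      by_contra hc
      rw [if_neg hc] at this
      exact absurd this (by simp)
    have e1 : (⟨2 * (t : ℕ), by have := t.isLt; omega⟩ : Fin (m k)) = pos k i :=
      hval _ (by simp [ind])
    have e1' : 2 * (t : ℕ) = (i : ℕ) % m k := congrArg Fin.val e1
    rcases Nat.lt_or_ge (t : ℕ) k with hlt | hge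
    · have e2 : (⟨2 * (t : ℕ) + 1, by omega⟩ : Fin (m k)) = pos k i :=
        hval _ (by simp [ind])
      have e2' : 2 * (t : ℕ) + 1 = (i : ℕ) % m k := congrArg Fin.val e2
      omega
    · have : (t : ℕ) = k := by have := t.isLt; omega
      omega
  · intro h
    apply (F_iff k _).mpr
    refine ⟨blk k i, ⟨k, Nat.lt_succ_self k⟩, ?_⟩
    rw [res_flip_single]
    funext p
    simp only [flipS, res, ind, Finset.mem_singleton]
    by_cases hp : (p : ℕ) = 2 * k
    · have : p = pos k i := Fin.ext (by rw [hp]; exact h.symm)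
      rw [if_pos this]
      simp [hp]
    · have hne : p ≠ pos k i := by
        intro e
        exact hp (by rw [e]; exact h)
      rw [if_neg hne]
      have hb := p.isLt
      have : ¬((p : ℕ) = 2 * k ∨ (p : ℕ) = 2 * k + 1) := by omega
      simp [this]

lemma sens_lower : sensAt (F k) (fun _ => false) = m k := by
  have hm : m k = 2 * k + 1 := rfl
  rw [sensAt]
  have hcongr : Finset.univ.filter
      (fun i : Fin ((m k) ^ 2) => F k (flipS (fun _ => false) {i}) ≠ F k (fun _ => false))
      = Finset.univ.filter (fun i : Fin ((m k) ^ 2) => (i : ℕ) % m k = 2 * k) := by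
    apply Finset.filter_congr
    intro i _
    rw [F_zero k]
    constructor
    · intro h
      exact (flip_zero_single k i).mp (btrue h)
    · intro h
      rw [(flip_zero_single k i).mpr h]
      simp
  rw [hcongr]
  have hcard : (Finset.univ.filter (fun i : Fin ((m k) ^ 2) => (i : ℕ) % m k = 2 * k)).card
      = (Finset.univ : Finset (Fin (m k))).card := by
    apply Finset.card_nbij' (blk k) (fun j => idx k j ⟨2 * k, by omega⟩)
    · intro a _
      exact Finset.mem_univ (blk k a)
    · intro j _
      simp only [Finset.mem_filter, Finset.mem_univ, true_and]
      have := congrArg Fin.val (pos_idx k j ⟨2 * k, by omega⟩)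
      simpa [pos] using this
    · intro a ha
      simp only [Finset.mem_coe, Finset.mem_filter, Finset.mem_univ, true_and] at ha
      have hpos : pos k a = ⟨2 * k, by omega⟩ := Fin.ext ha
      rw [← hpos]
      exact idx_blk_pos k a
    · intro j _
      exact blk_idx k j _
  rw [hcard]
  simp

lemma bs_upper (w : Fin ((m k) ^ 2) → Bool) (a : ℕ)
    (B : Fin a → Finset (Fin ((m k) ^ 2))) (hne : ∀ j, (B j).Nonempty)
    (hd : ∀ j₁ j₂, j₁ ≠ j₂ → Disjoint (B j₁) (B j₂))
    (hf : ∀ j, F k (flipS w (B j)) ≠ F k w) : a ≤ m k * (k + 1) := by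
  rcases hF : F k w with _ | _
  · -- F w = false
    have hx : ∀ i : Fin a, ∃ jt : Fin (m k) × Fin (k + 1),
        res k (flipS w (B i)) jt.1 = ind k jt.2 := by
      intro i
      have h := hf i
      rw [hF] at h
      obtain ⟨j, t, hh⟩ := (F_iff k _).mp (btrue h)
      exact ⟨(j, t), hh⟩
    choose φ hφ using hx
    have inj : Function.Injective φ := by
      intro i i' he
      by_contra hnei
      have key : ∀ p, idx k (φ i).1 p ∉ B i := by
        intro p hp
        have h2 : idx k (φ i).1 p ∉ B i' := Finset.disjoint_left.mp (hd i i' hnei) hp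
        have e1 : flipS w (B i) (idx k (φ i).1 p) = ind k (φ i).2 p := congrFun (hφ i) p
        have e2 : flipS w (B i') (idx k (φ i).1 p) = ind k (φ i).2 p := by
          have h3 := congrFun (hφ i') p
          rw [← he] at h3
          exact h3
        simp only [flipS, if_pos hp] at e1
        simp only [flipS, if_neg h2] at e2
        rw [← e2] at e1
        exact Bool.not_ne_self _ e1
      have hres : res k (flipS w (B i)) (φ i).1 = res k w (φ i).1 :=
        res_flip_ne k w (B i) _ key
      have : F k w = true := (F_iff k _).mpr ⟨(φ i).1, (φ i).2, by rw [← hres]; exact hφ i⟩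
      rw [hF] at this
      exact absurd this (by simp)
    have := Fintype.card_le_of_injective φ inj
    simpa [Fintype.card_prod] using this
  · -- F w = true
    obtain ⟨j0, t0, h0⟩ := (F_iff k _).mp hF
    have hx : ∀ i : Fin a, ∃ p, idx k j0 p ∈ B i := by
      intro i
      by_contra hcon
      push_neg at hcon
      have hres : res k (flipS w (B i)) j0 = res k w j0 := res_flip_ne k w (B i) j0 hcon
      have hFi : F k (flipS w (B i)) = true := (F_iff k _).mpr ⟨j0, t0, by rw [hres, h0]⟩
      exact hf i (hFi.trans hF.symm)
    choose c hc using hx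
    have inj : Function.Injective c := by
      intro i i' he
      by_contra hnei
      exact Finset.disjoint_left.mp (hd i i' hnei) (hc i) (by rw [he]; exact hc i')
    have h1 : a ≤ m k := by simpa using Fintype.card_le_of_injective c inj
    calc a ≤ m k := h1
      _ ≤ m k * (k + 1) := Nat.le_mul_of_pos_right _ (Nat.succ_pos k)

def Pat (j : Fin (m k)) (t : Fin (k + 1)) : Finset (Fin ((m k) ^ 2)) :=
  (Finset.univ.filter (fun p : Fin (m k) => ind k t p = true)).image (idx k j)

lemma mem_Pat (j : Fin (m k)) (t : Fin (k + 1)) (x : Fin ((m k) ^ 2)) :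
    x ∈ Pat k j t ↔ ∃ p, ind k t p = true ∧ idx k j p = x := by
  simp [Pat, Finset.mem_image, Finset.mem_filter]

lemma Pat_nonempty (j : Fin (m k)) (t : Fin (k + 1)) : (Pat k j t).Nonempty := by
  refine ⟨idx k j ⟨2 * (t : ℕ), by have := t.isLt; have hm : m k = 2 * k + 1 := rfl; omega⟩,
    (mem_Pat k j t _).mpr ⟨_, ?_, rfl⟩⟩
  simp [ind]

lemma Pat_disjoint (j j' : Fin (m k)) (t t' : Fin (k + 1)) (h : (j, t) ≠ (j', t')) :
    Disjoint (Pat k j t) (Pat k j' t') := by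
  rw [Finset.disjoint_left]
  intro x hx hx'
  obtain ⟨p, hp, hpx⟩ := (mem_Pat k j t x).mp hx
  obtain ⟨p', hp', hpx'⟩ := (mem_Pat k j' t' x).mp hx'
  have hij : idx k j p = idx k j' p' := hpx.trans hpx'.symm
  have hjj : j = j' := by rw [← blk_idx k j p, ← blk_idx k j' p', hij]
  have hpp : p = p' := by rw [← pos_idx k j p, ← pos_idx k j' p', hij]
  subst hjj; subst hpp
  have htt : t ≠ t' := fun e => h (by rw [e])
  have htt' : (t : ℕ) ≠ (t' : ℕ) := fun e => htt (Fin.ext e)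
  simp only [ind, decide_eq_true_eq] at hp hp'
  omega

lemma res_flip_Pat (j : Fin (m k)) (t : Fin (k + 1)) :
    res k (flipS (fun _ => false) (Pat k j t)) j = ind k t := by
  funext p
  simp only [res, flipS]
  by_cases h : idx k j p ∈ Pat k j t
  · rw [if_pos h]
    obtain ⟨p', hp', hpx⟩ := (mem_Pat k j t _).mp h
    have : p' = p := by rw [← pos_idx k j p', ← pos_idx k j p, hpx]
    rw [← this, hp']
    rfl
  · rw [if_neg h]
    by_contra hc
    have hind : ind k t p = true := by
      cases hval : ind k t p
      · rw [hval] at hc; exact absurd rfl hc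
      · rfl
    exact h ((mem_Pat k j t _).mpr ⟨p, hind, rfl⟩)

lemma bs_lower : (m k * (k + 1)) ∈ {a | ∃ B : Fin a → Finset (Fin ((m k) ^ 2)),
    (∀ j, (B j).Nonempty) ∧ (∀ j₁ j₂, j₁ ≠ j₂ → Disjoint (B j₁) (B j₂)) ∧
    (∀ j, F k (flipS (fun _ => false) (B j)) ≠ F k (fun _ => false))} := by
  refine ⟨fun i => Pat k (finProdFinEquiv.symm i).1 (finProdFinEquiv.symm i).2, ?_, ?_, ?_⟩
  · intro i
    exact Pat_nonempty k _ _
  · intro i i' hne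
    apply Pat_disjoint
    intro e
    apply hne
    have : finProdFinEquiv.symm i = finProdFinEquiv.symm i' := by
      rcases hsi : finProdFinEquiv.symm i with ⟨j1, t1⟩
      rcases hsi' : finProdFinEquiv.symm i' with ⟨j2, t2⟩
      rw [hsi, hsi'] at e
      exact e
    exact finProdFinEquiv.symm.injective this
  · intro i
    rw [F_zero]
    have : F k (flipS (fun _ => false)
        (Pat k (finProdFinEquiv.symm i).1 (finProdFinEquiv.symm i).2)) = true :=
      (F_iff k _).mpr ⟨(finProdFinEquiv.symm i).1, (finProdFinEquiv.symm i).2,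
        res_flip_Pat k _ _⟩
    rw [this]
    simp

lemma card_le_of_family {n a : ℕ} (B : Fin a → Finset (Fin n))
    (hne : ∀ j, (B j).Nonempty)
    (hd : ∀ j₁ j₂, j₁ ≠ j₂ → Disjoint (B j₁) (B j₂)) : a ≤ n := by
  have hc : ∀ j, ∃ x, x ∈ B j := fun j => hne j
  choose c hc using hc
  have inj : Function.Injective c := by
    intro j j' h
    by_contra hne'
    exact (Finset.disjoint_left.mp (hd _ _ hne') (hc j)) (h ▸ hc j')
  simpa using Fintype.card_le_of_injective c inj

lemma zero_mem_bsSet {n : ℕ} (f : (Fin n → Bool) → Bool) (w : Fin n → Bool) :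
    0 ∈ {a | ∃ B : Fin a → Finset (Fin n), (∀ j, (B j).Nonempty) ∧
      (∀ j₁ j₂, j₁ ≠ j₂ → Disjoint (B j₁) (B j₂)) ∧ (∀ j, f (flipS w (B j)) ≠ f w)} :=
  ⟨Fin.elim0, fun j => j.elim0, fun j => j.elim0, fun j => j.elim0⟩

lemma sens_eq : sens (F k) = m k := by
  apply le_antisymm
  · exact Finset.sup_le (fun w _ => sens_upper k w)
  · calc m k = sensAt (F k) (fun _ => false) := (sens_lower k).symm
      _ ≤ sens (F k) := Finset.le_sup (Finset.mem_univ _)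

lemma bs_eq : bs (F k) = m k * (k + 1) := by
  apply le_antisymm
  · apply Finset.sup_le
    intro w _
    apply csSup_le ⟨0, zero_mem_bsSet _ _⟩
    rintro a ⟨B, h1, h2, h3⟩
    exact bs_upper k w a B h1 h2 h3
  · calc m k * (k + 1)
        ≤ bsAt (F k) (fun _ => false) := by
          apply le_csSup
          · exact ⟨(m k) ^ 2, fun a ⟨B, h1, h2, _⟩ => card_le_of_family B h1 h2⟩
          · exact bs_lower k
      _ ≤ bs (F k) := Finset.le_sup (Finset.mem_univ _)

end SensProof

theorem stmt0 (k : ℕ) :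
    ∃ f : (Fin ((2*k+1)^2) → Bool) → Bool,
      sens f = 2*k+1 ∧ bs f = (2*k+1)*(k+1) := by
  exact ⟨SensProof.F k, SensProof.sens_eq k, SensProof.bs_eq k⟩
end

section
/- Let k ≥ 0 and n = (2k+1)^2. Partition the n variables into 2k+1 sections of 2k+1 variables each. Call a section x_1,…,x_{2k+1} 'good' if either x_{2i-1}=x_{2i}=1 for some 1 ≤ i ≤ k and all other bits of the section are 0, or x_{2k+1}=1 and all other bits are 0. Define f(w)=1 iff some section of w is good. Then for every input w, s(f,w) ≤ 2k+1. -/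
def secIdx (k : ℕ) (s p : Fin (2*k+1)) : Fin ((2*k+1)^2) :=
  ⟨s.val * (2*k+1) + p.val, by have := s.isLt; have := p.isLt; nlinarith⟩

def sectionOf (k : ℕ) (w : Fin ((2*k+1)^2) → Bool) (s : Fin (2*k+1)) : Fin (2*k+1) → Bool :=
  fun p => w (secIdx k s p)

def goodSection (k : ℕ) (x : Fin (2*k+1) → Bool) : Prop :=
  (∃ i < k, ∀ j : Fin (2*k+1), x j = decide (j.val = 2*i ∨ j.val = 2*i+1)) ∨
  (∀ j : Fin (2*k+1), x j = decide (j.val = 2*k))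

instance (k : ℕ) (x : Fin (2*k+1) → Bool) : Decidable (goodSection k x) := by
  unfold goodSection; infer_instance

def goodF (k : ℕ) : (Fin ((2*k+1)^2) → Bool) → Bool :=
  fun w => decide (∃ s : Fin (2*k+1), goodSection k (sectionOf k w s))

-- helpers
def secOf (k : ℕ) (i : Fin ((2*k+1)^2)) : Fin (2*k+1) :=
  ⟨i.val / (2*k+1), by
    have h : i.val < (2*k+1)*(2*k+1) := by have := i.isLt; simpa [pow_two] using this
    exact (Nat.div_lt_iff_lt_mul (by omega)).mpr h⟩

def posOf (k : ℕ) (i : Fin ((2*k+1)^2)) : Fin (2*k+1) :=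
  ⟨i.val % (2*k+1), Nat.mod_lt _ (by omega)⟩

lemma secIdx_secOf_posOf (k : ℕ) (i : Fin ((2*k+1)^2)) :
    secIdx k (secOf k i) (posOf k i) = i := by
  apply Fin.ext
  exact Nat.div_add_mod' i.val (2*k+1)

lemma secOf_secIdx (k : ℕ) (s p : Fin (2*k+1)) : secOf k (secIdx k s p) = s := by
  apply Fin.ext
  show (s.val * (2*k+1) + p.val) / (2*k+1) = s.val
  rw [Nat.add_comm, Nat.add_mul_div_right _ _ (by omega : 0 < 2*k+1),
    Nat.div_eq_of_lt p.isLt]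
  omega

lemma posOf_secIdx (k : ℕ) (s p : Fin (2*k+1)) : posOf k (secIdx k s p) = p := by
  apply Fin.ext
  show (s.val * (2*k+1) + p.val) % (2*k+1) = p.val
  rw [Nat.add_comm, Nat.add_mul_mod_self_right, Nat.mod_eq_of_lt p.isLt]

lemma three_pigeon {α : Type*} {a b c p q : α} (hab : a ≠ b) (hac : a ≠ c) (hbc : b ≠ c)
    (ha : a = p ∨ a = q) (hb : b = p ∨ b = q) (hc : c = p ∨ c = q) : False := by
  rcases ha with h1|h1 <;> rcases hb with h2|h2 <;> rcases hc with h3|h3 <;>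
    first
      | exact hab (h1.trans h2.symm)
      | exact hac (h1.trans h3.symm)
      | exact hbc (h2.trans h3.symm)

theorem good_rigid (k : ℕ) (x y : Fin (2*k+1) → Bool) (p q : Fin (2*k+1))
    (hx : goodSection k x) (hy : goodSection k y)
    (h : ∀ j, j ≠ p → j ≠ q → x j = y j) : x = y := by
  have mem : ∀ j : Fin (2*k+1), x j ≠ y j → j = p ∨ j = q := by
    intro j hj
    by_contra hc
    push_neg at hc
    exact hj (h j hc.1 hc.2)
  rcases hx with ⟨i, hi, hxj⟩ | hxj <;> rcases hy with ⟨i', hi', hyj⟩ | hyj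
  · by_cases hii : i = i'
    · subst hii; funext j; rw [hxj, hyj]
    · exfalso
      set a : Fin (2*k+1) := ⟨2*i, by omega⟩
      set b : Fin (2*k+1) := ⟨2*i+1, by omega⟩
      set c : Fin (2*k+1) := ⟨2*i', by omega⟩
      have hxa : x a ≠ y a := by rw [hxj a, hyj a]; simp [a]; omega
      have hxb : x b ≠ y b := by rw [hxj b, hyj b]; simp [b]; omega
      have hxc : x c ≠ y c := by rw [hxj c, hyj c]; simp [c]; omega
      exact three_pigeon (a := a) (b := b) (c := c)
        (by simp [a, b, Fin.ext_iff]) (by simp [a, c, Fin.ext_iff]; omega)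
        (by simp [b, c, Fin.ext_iff]; omega)
        (mem a hxa) (mem b hxb) (mem c hxc)
  · exfalso
    set a : Fin (2*k+1) := ⟨2*i, by omega⟩
    set b : Fin (2*k+1) := ⟨2*i+1, by omega⟩
    set c : Fin (2*k+1) := ⟨2*k, by omega⟩
    have hxa : x a ≠ y a := by rw [hxj a, hyj a]; simp [a]; omega
    have hxb : x b ≠ y b := by rw [hxj b, hyj b]; simp [b]; omega
    have hxc : x c ≠ y c := by rw [hxj c, hyj c]; simp [c]; omega
    exact three_pigeon (a := a) (b := b) (c := c)
      (by simp [a, b, Fin.ext_iff]) (by simp [a, c, Fin.ext_iff]; omega)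
      (by simp [b, c, Fin.ext_iff]; omega)
      (mem a hxa) (mem b hxb) (mem c hxc)
  · exfalso
    set a : Fin (2*k+1) := ⟨2*i', by omega⟩
    set b : Fin (2*k+1) := ⟨2*i'+1, by omega⟩
    set c : Fin (2*k+1) := ⟨2*k, by omega⟩
    have hxa : x a ≠ y a := by rw [hxj a, hyj a]; simp [a]; omega
    have hxb : x b ≠ y b := by rw [hxj b, hyj b]; simp [b]; omega
    have hxc : x c ≠ y c := by rw [hxj c, hyj c]; simp [c]; omega
    exact three_pigeon (a := a) (b := b) (c := c)
      (by simp [a, b, Fin.ext_iff]) (by simp [a, c, Fin.ext_iff]; omega)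
      (by simp [b, c, Fin.ext_iff]; omega)
      (mem a hxa) (mem b hxb) (mem c hxc)
  · funext j; rw [hxj, hyj]

lemma flipS_single {n : ℕ} (w : Fin n → Bool) (i j : Fin n) :
    flipS w {i} j = if j = i then !(w j) else w j := by
  simp [flipS]

lemma sectionOf_flip_ne (k : ℕ) (w : Fin ((2*k+1)^2) → Bool) (i : Fin ((2*k+1)^2))
    (t : Fin (2*k+1)) (ht : t ≠ secOf k i) :
    sectionOf k (flipS w {i}) t = sectionOf k w t := by
  funext q
  show flipS w {i} (secIdx k t q) = w (secIdx k t q)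
  rw [flipS_single]
  have : secIdx k t q ≠ i := by
    intro he
    exact ht (by rw [← he, secOf_secIdx])
  simp [this]

lemma sectionOf_flip_self (k : ℕ) (w : Fin ((2*k+1)^2) → Bool) (i : Fin ((2*k+1)^2)) :
    sectionOf k (flipS w {i}) (secOf k i) =
      Function.update (sectionOf k w (secOf k i)) (posOf k i) (!(w i)) := by
  funext q
  show flipS w {i} (secIdx k (secOf k i) q) = _
  rw [flipS_single]
  rcases eq_or_ne q (posOf k i) with hq | hq
  · subst hq
    rw [secIdx_secOf_posOf]
    simp
  · have hne : secIdx k (secOf k i) q ≠ i := by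
      intro he
      exact hq (by rw [← posOf_secIdx k (secOf k i) q, he])
    simp [hne, Function.update_of_ne hq, sectionOf]

lemma sectionOf_at (k : ℕ) (w : Fin ((2*k+1)^2) → Bool) (i : Fin ((2*k+1)^2)) :
    sectionOf k w (secOf k i) (posOf k i) = w i := by
  show w (secIdx k (secOf k i) (posOf k i)) = w i
  rw [secIdx_secOf_posOf]

theorem stmt1 (k : ℕ) (w : Fin ((2*k+1)^2) → Bool) :
    sensAt (goodF k) w ≤ 2*k+1 := by
  classical
  unfold sensAt
  set S := Finset.univ.filter (fun i => goodF k (flipS w {i}) ≠ goodF k w) with hS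
  rcases hfw : goodF k w with _ | _
  · -- f w = false
    have hnot : ∀ s : Fin (2*k+1), ¬ goodSection k (sectionOf k w s) := by
      have := of_decide_eq_false hfw
      push_neg at this
      exact this
    -- each i in S makes its own section good
    have hgood : ∀ i ∈ S, goodSection k
        (Function.update (sectionOf k w (secOf k i)) (posOf k i) (!(w i))) := by
      intro i hi
      simp only [hS, Finset.mem_filter, hfw] at hi
      have hne : goodF k (flipS w {i}) = true := by
        cases h : goodF k (flipS w {i}) with
        | false => exact absurd h hi.2
        | true => rfl
      obtain ⟨t, ht⟩ := of_decide_eq_true hne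
      rcases eq_or_ne t (secOf k i) with rfl | htne
      · rwa [sectionOf_flip_self] at ht
      · rw [sectionOf_flip_ne k w i t htne] at ht
        exact absurd ht (hnot t)
    calc S.card ≤ (Finset.univ : Finset (Fin (2*k+1))).card := by
          apply Finset.card_le_card_of_injOn (fun i => secOf k i)
          · intro i _; exact Finset.mem_univ _
          · intro i hi i' hi' hsec
            simp only at hsec
            rw [Finset.mem_coe] at hi hi'
            by_contra hii
            have hp : posOf k i ≠ posOf k i' := by
              intro hp
              exact hii (by rw [← secIdx_secOf_posOf k i, ← secIdx_secOf_posOf k i', hsec, hp])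
            have h1 := hgood i hi
            have h2 := hgood i' hi'
            rw [hsec] at h1
            set x := sectionOf k w (secOf k i') with hx
            set p := posOf k i with hp'
            set q := posOf k i' with hq'
            have heq : Function.update x p (!(w i)) = Function.update x q (!(w i')) := by
              apply good_rigid k _ _ p q h1 h2
              intro j hjp hjq
              rw [Function.update_of_ne hjp, Function.update_of_ne hjq]
            have := congrFun heq p
            rw [Function.update_self, Function.update_of_ne hp] at this
            have hwi : x p = w i := by rw [hx, hp', ← hsec]; exact sectionOf_at k w i
            rw [hwi] at this
            simp at this
      _ = 2*k+1 := by simp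
  · -- f w = true
    obtain ⟨s, hs⟩ := of_decide_eq_true hfw
    have hsec : ∀ i ∈ S, secOf k i = s := by
      intro i hi
      simp only [hS, Finset.mem_filter, hfw] at hi
      by_contra hne
      apply hi.2
      have : goodF k (flipS w {i}) = true := by
        apply decide_eq_true
        exact ⟨s, by rwa [sectionOf_flip_ne k w i s (Ne.symm hne)]⟩
      rw [this]
    calc S.card ≤ (Finset.univ : Finset (Fin (2*k+1))).card := by
          apply Finset.card_le_card_of_injOn (fun i => posOf k i)
          · intro i _; exact Finset.mem_univ _
          · intro i hi i' hi' hpos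
            simp only at hpos
            rw [Finset.mem_coe] at hi hi'
            rw [← secIdx_secOf_posOf k i, ← secIdx_secOf_posOf k i', hsec i hi, hsec i' hi', hpos]
      _ = 2*k+1 := by simp
end

section
/- For any Boolean function f on n variables, if the maximal block sensitivity is achieved with u blocks of size 1 and v blocks of size at least 2, then bs(f) = u + v ≤ (s(f) + n)/2. In particular, for any f on n variables, bs(f) ≤ (s(f) + n)/2. -/
lemma sum_card_le {n m : ℕ} (B : Fin m → Finset (Fin n))
    (hdisj : ∀ j₁ j₂, j₁ ≠ j₂ → Disjoint (B j₁) (B j₂)) :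
    ∑ j, (B j).card ≤ n := by
  calc ∑ j, (B j).card = (Finset.univ.biUnion B).card :=
        (Finset.card_biUnion (fun j _ k _ h => hdisj j k h)).symm
    _ ≤ (Finset.univ : Finset (Fin n)).card := Finset.card_le_univ _
    _ = n := by simp

lemma key {n : ℕ} (f : (Fin n → Bool) → Bool) (w : Fin n → Bool) (m : ℕ)
    (B : Fin m → Finset (Fin n))
    (h1 : ∀ j, (B j).Nonempty)
    (h2 : ∀ j₁ j₂, j₁ ≠ j₂ → Disjoint (B j₁) (B j₂))
    (h3 : ∀ j, f (flipS w (B j)) ≠ f w) :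
    m = (Finset.univ.filter (fun j => (B j).card = 1)).card
        + (Finset.univ.filter (fun j => 2 ≤ (B j).card)).card ∧
    2 * m ≤ sens f + n := by
  have hpos : ∀ j, 1 ≤ (B j).card := fun j => Finset.card_pos.mpr (h1 j)
  have hVeq : (Finset.univ.filter (fun j => 2 ≤ (B j).card))
      = (Finset.univ.filter (fun j => ¬ (B j).card = 1)) := by
    ext j
    simp only [Finset.mem_filter, Finset.mem_univ, true_and]
    have := hpos j
    omega
  set U := Finset.univ.filter (fun j => (B j).card = 1) with hU
  set V := Finset.univ.filter (fun j => 2 ≤ (B j).card) with hV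
  have hpart : U.card + V.card = m := by
    rw [hVeq, Finset.card_filter_add_card_filter_not]
    simp
  set g : Fin m → Fin n := fun j => (h1 j).choose with hg
  have hgmem : ∀ j, g j ∈ B j := fun j => (h1 j).choose_spec
  have hsing : ∀ j ∈ U, B j = {g j} := by
    intro j hj
    have hj1 : (B j).card = 1 := (Finset.mem_filter.mp hj).2
    exact Finset.eq_singleton_iff_unique_mem.mpr
      ⟨hgmem j, fun b hb => Finset.card_le_one.mp (le_of_eq hj1) b hb (g j) (hgmem j)⟩
  have husens : U.card ≤ sensAt f w := by
    apply Finset.card_le_card_of_injOn g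
    · intro j hj
      simp only [Finset.mem_coe, Finset.mem_filter, Finset.mem_univ, true_and]
      have := h3 j
      rwa [hsing j hj] at this
    · intro j₁ hj₁ j₂ hj₂ heq
      by_contra hne
      have hd := h2 j₁ j₂ hne
      have h2mem : g j₁ ∈ B j₂ := heq ▸ hgmem j₂
      exact (Finset.disjoint_left.mp hd (hgmem j₁)) h2mem
  have hsens : sensAt f w ≤ sens f := Finset.le_sup (Finset.mem_univ w)
  -- u + 2v ≤ n
  have hsum : U.card + 2 * V.card ≤ ∑ j, (B j).card := by
    have hsplit : ∑ j ∈ U, (B j).card + ∑ j ∈ Finset.univ.filter (fun j => ¬ (B j).card = 1), (B j).card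
        = ∑ j, (B j).card := Finset.sum_filter_add_sum_filter_not _ _ _
    have hUsum : ∑ j ∈ U, (B j).card = U.card := by
      rw [Finset.sum_congr rfl (fun j hj => (Finset.mem_filter.mp hj).2)]
      simp [hU]
    have hVsum : 2 * V.card ≤ ∑ j ∈ V, (B j).card := by
      calc 2 * V.card = ∑ _j ∈ V, 2 := by rw [Finset.sum_const]; ring
        _ ≤ ∑ j ∈ V, (B j).card := Finset.sum_le_sum (fun j hj => (Finset.mem_filter.mp hj).2)
    rw [← hVeq] at hsplit
    omega
  have hn := sum_card_le B h2
  refine ⟨hpart.symm, ?_⟩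
  omega

lemma blocks_le_n {n : ℕ} (f : (Fin n → Bool) → Bool) (w : Fin n → Bool) :
    ∀ k ∈ {k | ∃ B : Fin k → Finset (Fin n), (∀ j, (B j).Nonempty) ∧
      (∀ j₁ j₂, j₁ ≠ j₂ → Disjoint (B j₁) (B j₂)) ∧ (∀ j, f (flipS w (B j)) ≠ f w)}, k ≤ n := by
  rintro k ⟨B, h1, h2, -⟩
  have hpos : ∀ j, 1 ≤ (B j).card := fun j => Finset.card_pos.mpr (h1 j)
  calc k = ∑ _j : Fin k, 1 := by simp
    _ ≤ ∑ j, (B j).card := Finset.sum_le_sum (fun j _ => hpos j)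
    _ ≤ n := sum_card_le B h2

theorem stmt3 (n : ℕ) (f : (Fin n → Bool) → Bool) :
    (∀ (w : Fin n → Bool) (m : ℕ) (B : Fin m → Finset (Fin n)),
      (∀ j, (B j).Nonempty) →
      (∀ j₁ j₂, j₁ ≠ j₂ → Disjoint (B j₁) (B j₂)) →
      (∀ j, f (flipS w (B j)) ≠ f w) →
      bs f = m →
      bs f = (Finset.univ.filter (fun j => (B j).card = 1)).card
              + (Finset.univ.filter (fun j => 2 ≤ (B j).card)).card ∧
      bs f ≤ (sens f + n) / 2) ∧
    bs f ≤ (sens f + n) / 2 := by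
  constructor
  · intro w m B h1 h2 h3 hm
    obtain ⟨heq, hineq⟩ := key f w m B h1 h2 h3
    exact ⟨hm.trans heq, by omega⟩
  · -- find a witness achieving bs f
    obtain ⟨w, -, hw⟩ := Finset.exists_mem_eq_sup (Finset.univ : Finset (Fin n → Bool))
      Finset.univ_nonempty (fun w => bsAt f w)
    have hne : ({k | ∃ B : Fin k → Finset (Fin n), (∀ j, (B j).Nonempty) ∧
        (∀ j₁ j₂, j₁ ≠ j₂ → Disjoint (B j₁) (B j₂)) ∧
        (∀ j, f (flipS w (B j)) ≠ f w)} : Set ℕ).Nonempty :=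
      ⟨0, fun j => j.elim0, fun j => j.elim0, fun j₁ => j₁.elim0, fun j => j.elim0⟩
    have hbdd : BddAbove {k | ∃ B : Fin k → Finset (Fin n), (∀ j, (B j).Nonempty) ∧
        (∀ j₁ j₂, j₁ ≠ j₂ → Disjoint (B j₁) (B j₂)) ∧
        (∀ j, f (flipS w (B j)) ≠ f w)} :=
      ⟨n, fun k hk => blocks_le_n f w k hk⟩
    have hmem := Nat.sSup_mem hne hbdd
    obtain ⟨B, h1, h2, h3⟩ := hmem
    obtain ⟨-, hineq⟩ := key f w (bsAt f w) B h1 h2 h3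
    have : bs f = bsAt f w := hw
    omega
end

section
/- Let k ≥ 0 and let f be the 'good sections' function on (2k+1)^2 variables (f(w)=1 iff some section is good, where a section is good if it equals exactly one pair x_{2i-1}=x_{2i}=1, 1 ≤ i ≤ k, with all other section bits 0, or exactly x_{2k+1}=1 with all others 0). Then bs(f) = (1/2)·s(f)^2 + (1/2)·s(f). -/
namespace Stmt7

def gpat (k i : ℕ) : Fin (2*k+1) → Bool := fun j => decide (j.val = 2*i ∨ j.val = 2*i+1)

lemma goodSection_iff (k : ℕ) (x : Fin (2*k+1) → Bool) :
    goodSection k x ↔ ∃ i ≤ k, x = gpat k i := by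
  unfold goodSection gpat
  constructor
  · rintro (⟨i, hik, h⟩ | h)
    · exact ⟨i, le_of_lt hik, funext h⟩
    · refine ⟨k, le_refl _, funext fun j => ?_⟩
      have := j.isLt
      rw [h j]
      rw [decide_eq_decide]
      omega
  · rintro ⟨i, hik, rfl⟩
    rcases lt_or_eq_of_le hik with h | rfl
    · exact Or.inl ⟨i, h, fun j => rfl⟩
    · refine Or.inr fun j => ?_
      have := j.isLt
      rw [decide_eq_decide]
      omega

def diff {m : ℕ} (x y : Fin m → Bool) : Finset (Fin m) :=
  Finset.univ.filter (fun j => x j ≠ y j)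

lemma flipS_eq_iff {m : ℕ} (x g : Fin m → Bool) (D : Finset (Fin m)) :
    flipS x D = g ↔ D = diff x g := by
  simp only [funext_iff, Finset.ext_iff, flipS, diff, Finset.mem_filter, Finset.mem_univ, true_and]
  refine forall_congr' fun j => ?_
  by_cases h : j ∈ D <;> simp [h] <;> cases x j <;> cases g j <;> simp

lemma diff_triangle {m : ℕ} (x g g' : Fin m → Bool) :
    diff g g' ⊆ diff x g ∪ diff x g' := by
  intro j hj
  simp only [diff, Finset.mem_filter, Finset.mem_univ, true_and, Finset.mem_union] at *
  by_cases h : x j = g j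
  · right; rw [h]; exact hj
  · left; exact h

end Stmt7
namespace Stmt7

lemma diff_comm {m : ℕ} (x y : Fin m → Bool) : diff x y = diff y x := by
  ext j; simp only [diff, Finset.mem_filter, Finset.mem_univ, true_and]; exact ne_comm

lemma gpat_card_diff {k i i' : ℕ} (hi : i ≤ k) (hi' : i' ≤ k) (hne : i ≠ i') :
    3 ≤ (diff (gpat k i) (gpat k i')).card := by
  wlog h : i < i' generalizing i i'
  · have := this hi' hi (Ne.symm hne) (by omega)
    rwa [diff_comm] at this
  have hik : i < k := lt_of_lt_of_le h hi'
  have ha : (2*i : ℕ) < 2*k+1 := by omega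
  have hb : (2*i+1 : ℕ) < 2*k+1 := by omega
  have hc : (2*i' : ℕ) < 2*k+1 := by omega
  have hs : ({⟨2*i, ha⟩, ⟨2*i+1, hb⟩, ⟨2*i', hc⟩} : Finset (Fin (2*k+1))) ⊆
      diff (gpat k i) (gpat k i') := by
    intro j hj
    simp only [Finset.mem_insert, Finset.mem_singleton] at hj
    simp only [diff, Finset.mem_filter, Finset.mem_univ, true_and, gpat, ne_eq,
      decide_eq_decide]
    rcases hj with rfl | rfl | rfl <;> simp only [Fin.val_mk] <;> intro hiff
    · have := hiff.mp (Or.inl trivial); omega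
    · have := hiff.mp (Or.inr trivial); omega
    · have := hiff.mpr (Or.inl trivial); omega
  have hcard : ({⟨2*i, ha⟩, ⟨2*i+1, hb⟩, ⟨2*i', hc⟩} : Finset (Fin (2*k+1))).card = 3 :=
    Finset.card_eq_three.mpr ⟨_, _, _, Fin.ne_of_val_ne (by simp only [Fin.val_mk]; omega),
      Fin.ne_of_val_ne (by simp only [Fin.val_mk]; omega), Fin.ne_of_val_ne (by simp only [Fin.val_mk]; omega), rfl⟩
  calc 3 = _ := hcard.symm
    _ ≤ _ := Finset.card_le_card hs

end Stmt7
namespace Stmt7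

lemma secIdx_inj {k : ℕ} {s s' p p' : Fin (2*k+1)}
    (h : secIdx k s p = secIdx k s' p') : s = s' ∧ p = p' := by
  have hv : s.val * (2*k+1) + p.val = s'.val * (2*k+1) + p'.val := congrArg Fin.val h
  have hp := p.isLt; have hp' := p'.isLt
  have h1 : ∀ a b : ℕ, b < 2*k+1 → (a * (2*k+1) + b) % (2*k+1) = b := by
    intro a b hb; rw [add_comm, Nat.add_mul_mod_self_right]; exact Nat.mod_eq_of_lt hb
  have h2 : ∀ a b : ℕ, b < 2*k+1 → (a * (2*k+1) + b) / (2*k+1) = a := by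
    intro a b hb
    rw [add_comm, Nat.add_mul_div_right _ _ (by omega : 0 < 2*k+1), Nat.div_eq_of_lt hb,
      Nat.zero_add]
  have hpp : p.val = p'.val := by
    rw [← h1 s.val p.val hp, ← h1 s'.val p'.val hp', hv]
  have hss : s.val = s'.val := by
    rw [← h2 s.val p.val hp, ← h2 s'.val p'.val hp', hv]
  exact ⟨Fin.ext hss, Fin.ext hpp⟩

def sOf (k : ℕ) (i : Fin ((2*k+1)^2)) : Fin (2*k+1) :=
  ⟨i.val / (2*k+1), by
    rw [Nat.div_lt_iff_lt_mul (by omega)]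
    exact lt_of_lt_of_eq i.isLt (pow_two _)⟩

def pOf (k : ℕ) (i : Fin ((2*k+1)^2)) : Fin (2*k+1) :=
  ⟨i.val % (2*k+1), Nat.mod_lt _ (by omega)⟩

lemma secIdx_sOf_pOf {k : ℕ} (i : Fin ((2*k+1)^2)) : secIdx k (sOf k i) (pOf k i) = i := by
  apply Fin.ext
  show i.val / (2*k+1) * (2*k+1) + i.val % (2*k+1) = i.val
  rw [Nat.mul_comm]; exact Nat.div_add_mod _ _

lemma secIdx_eq_iff {k : ℕ} {s p : Fin (2*k+1)} {i : Fin ((2*k+1)^2)} :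
    secIdx k s p = i ↔ s = sOf k i ∧ p = pOf k i := by
  constructor
  · intro h; exact secIdx_inj (h.trans (secIdx_sOf_pOf i).symm)
  · rintro ⟨rfl, rfl⟩; exact secIdx_sOf_pOf i

def loc (k : ℕ) (S : Finset (Fin ((2*k+1)^2))) (s : Fin (2*k+1)) : Finset (Fin (2*k+1)) :=
  Finset.univ.filter (fun p => secIdx k s p ∈ S)

lemma mem_loc {k : ℕ} {S : Finset (Fin ((2*k+1)^2))} {s p : Fin (2*k+1)} :
    p ∈ loc k S s ↔ secIdx k s p ∈ S := by
  simp [loc]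

lemma sectionOf_flipS {k : ℕ} (w : Fin ((2*k+1)^2) → Bool) (S : Finset (Fin ((2*k+1)^2)))
    (s : Fin (2*k+1)) :
    sectionOf k (flipS w S) s = flipS (sectionOf k w s) (loc k S s) := by
  funext p
  simp [sectionOf, flipS, loc]

lemma goodF_true_iff {k : ℕ} (w : Fin ((2*k+1)^2) → Bool) :
    goodF k w = true ↔ ∃ s, goodSection k (sectionOf k w s) := by
  simp [goodF]

lemma goodF_false_iff {k : ℕ} (w : Fin ((2*k+1)^2) → Bool) :
    goodF k w = false ↔ ∀ s, ¬ goodSection k (sectionOf k w s) := by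
  simp [goodF]

lemma loc_singleton {k : ℕ} (i : Fin ((2*k+1)^2)) (s : Fin (2*k+1)) :
    loc k {i} s = if s = sOf k i then {pOf k i} else ∅ := by
  ext p
  simp only [mem_loc, Finset.mem_singleton, secIdx_eq_iff]
  by_cases h : s = sOf k i <;> simp [h]

end Stmt7
namespace Stmt7

lemma flipS_empty {m : ℕ} (x : Fin m → Bool) : flipS x ∅ = x := by
  funext j; simp [flipS]

lemma sensAt_le (k : ℕ) (w : Fin ((2*k+1)^2) → Bool) : sensAt (goodF k) w ≤ 2*k+1 := by
  unfold sensAt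
  have hcard : (Finset.univ : Finset (Fin (2*k+1))).card = 2*k+1 := by simp
  refine le_trans ?_ hcard.le
  cases hf : goodF k w with
  | true =>
    obtain ⟨s0, hs0⟩ := (goodF_true_iff w).mp hf
    have key : ∀ i ∈ Finset.univ.filter (fun i => goodF k (flipS w {i}) ≠ true),
        sOf k i = s0 := by
      intro i hi
      simp only [Finset.mem_filter, Finset.mem_univ, true_and] at hi
      by_contra hne
      have hflip : goodF k (flipS w {i}) = false := by
        cases hh : goodF k (flipS w {i}) with
        | false => rfl
        | true => exact absurd hh hi
      have : ¬ goodSection k (sectionOf k (flipS w {i}) s0) :=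
        (goodF_false_iff _).mp hflip s0
      apply this
      rw [sectionOf_flipS, loc_singleton, if_neg (fun h => hne h.symm), flipS_empty]
      exact hs0
    apply Finset.card_le_card_of_injOn (fun i => pOf k i) (fun _ _ => Finset.mem_univ _)
    intro i hi i' hi' hpp0
    have hpp : pOf k i = pOf k i' := hpp0
    simp only [Finset.mem_coe] at hi hi'
    have h1 := key i hi
    have h2 := key i' hi'
    rw [← secIdx_sOf_pOf (k := k) i, ← secIdx_sOf_pOf (k := k) i', h1, h2, hpp]
  | false =>
    have key : ∀ i ∈ Finset.univ.filter (fun i => goodF k (flipS w {i}) ≠ false),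
        ∃ a : ℕ, a ≤ k ∧ ({pOf k i} : Finset (Fin (2*k+1))) =
          diff (sectionOf k w (sOf k i)) (gpat k a) := by
      intro i hi
      simp only [Finset.mem_filter, Finset.mem_univ, true_and] at hi
      have hflip : goodF k (flipS w {i}) = true := by
        cases hh : goodF k (flipS w {i}) with
        | true => rfl
        | false => exact absurd hh hi
      obtain ⟨s, hs⟩ := (goodF_true_iff _).mp hflip
      have hss : s = sOf k i := by
        by_contra hne
        rw [sectionOf_flipS, loc_singleton, if_neg hne, flipS_empty] at hs
        exact (goodF_false_iff w).mp hf s hs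
      subst hss
      rw [sectionOf_flipS, loc_singleton, if_pos rfl] at hs
      obtain ⟨a, hak, ha⟩ := (goodSection_iff _ _).mp hs
      exact ⟨a, hak, (flipS_eq_iff _ _ _).mp ha⟩
    apply Finset.card_le_card_of_injOn (fun i => sOf k i) (fun _ _ => Finset.mem_univ _)
    intro i hi i' hi' hss0
    have hss : sOf k i = sOf k i' := hss0
    simp only [Finset.mem_coe] at hi hi'
    by_contra hne
    obtain ⟨a, hak, ha⟩ := key i hi
    obtain ⟨a', hak', ha'⟩ := key i' hi'
    have hpp : pOf k i ≠ pOf k i' := by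
      intro hp
      apply hne
      rw [← secIdx_sOf_pOf (k := k) i, ← secIdx_sOf_pOf (k := k) i', hss, hp]
    have haa : a ≠ a' := by
      rintro rfl
      rw [hss] at ha
      apply hpp
      have := ha'.trans ha.symm
      have h5 : pOf k i' = pOf k i := by simpa using this
      exact h5.symm
    have h3 := gpat_card_diff hak hak' haa
    have h4 : (diff (gpat k a) (gpat k a')).card ≤ 2 := by
      calc (diff (gpat k a) (gpat k a')).card
          ≤ (diff (sectionOf k w (sOf k i')) (gpat k a) ∪
             diff (sectionOf k w (sOf k i')) (gpat k a')).card :=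
            Finset.card_le_card (diff_triangle _ _ _)
        _ ≤ (diff (sectionOf k w (sOf k i')) (gpat k a)).card +
            (diff (sectionOf k w (sOf k i')) (gpat k a')).card := Finset.card_union_le _ _
        _ ≤ 2 := by
            rw [hss] at ha
            rw [← ha, ← ha']
            simp
    omega

end Stmt7
namespace Stmt7

lemma zero_not_good (k : ℕ) : ¬ goodSection k (fun _ => false) := by
  rw [goodSection_iff]
  rintro ⟨i, hik, h⟩
  have h2i : (2*i : ℕ) < 2*k+1 := by omega
  have := congrFun h ⟨2*i, h2i⟩
  simp [gpat] at this

lemma diff_self {m : ℕ} (x : Fin m → Bool) : diff x x = ∅ := by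
  ext j; simp [diff]

lemma gpatk_flip_not_good (k : ℕ) (p : Fin (2*k+1)) :
    ¬ goodSection k (flipS (gpat k k) ({p} : Finset (Fin (2*k+1)))) := by
  rw [goodSection_iff]
  rintro ⟨i, hik, h⟩
  rw [flipS_eq_iff] at h
  rcases eq_or_ne i k with rfl | hne
  · rw [diff_self] at h
    exact absurd h (Finset.singleton_ne_empty p)
  · have h3 := gpat_card_diff (le_refl k) hik (Ne.symm hne)
    rw [← h, Finset.card_singleton] at h3
    omega

def w0 (k : ℕ) : Fin ((2*k+1)^2) → Bool := fun idx => decide (idx.val = 2*k)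

lemma z0_lt (k : ℕ) : 0 < 2*k+1 := by omega

lemma sectionOf_w0_zero (k : ℕ) : sectionOf k (w0 k) ⟨0, z0_lt k⟩ = gpat k k := by
  funext p
  simp only [sectionOf, w0, secIdx, gpat, Fin.val_mk]
  show decide (0 * (2*k+1) + p.val = 2*k) = decide (p.val = 2*k ∨ p.val = 2*k+1)
  rw [decide_eq_decide]
  have := p.isLt
  omega

lemma sectionOf_w0_ne (k : ℕ) (s : Fin (2*k+1)) (hs : s ≠ ⟨0, z0_lt k⟩) :
    sectionOf k (w0 k) s = fun _ => false := by
  funext p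
  simp only [sectionOf, w0, secIdx, Fin.val_mk]
  have hs1 : 1 ≤ s.val := by
    rcases Nat.eq_zero_or_pos s.val with h0 | h1
    · exact absurd (Fin.ext h0) hs
    · exact h1
  have hmul : 2*k+1 ≤ s.val * (2*k+1) := le_trans (le_of_eq (one_mul _).symm)
    (Nat.mul_le_mul_right _ hs1)
  show decide (s.val * (2*k+1) + p.val = 2*k) = false
  rw [decide_eq_false_iff_not]
  omega

lemma goodF_w0 (k : ℕ) : goodF k (w0 k) = true := by
  rw [goodF_true_iff]
  exact ⟨⟨0, z0_lt k⟩, by rw [sectionOf_w0_zero]; exact (goodSection_iff _ _).mpr ⟨k, le_refl k, rfl⟩⟩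

lemma sensAt_w0 (k : ℕ) : 2*k+1 ≤ sensAt (goodF k) (w0 k) := by
  unfold sensAt
  have hsub : (Finset.univ.image (secIdx k ⟨0, z0_lt k⟩)) ⊆
      Finset.univ.filter (fun i => goodF k (flipS (w0 k) {i}) ≠ goodF k (w0 k)) := by
    intro i hi
    obtain ⟨p, _, rfl⟩ := Finset.mem_image.mp hi
    simp only [Finset.mem_filter, Finset.mem_univ, true_and, goodF_w0]
    have hflip : goodF k (flipS (w0 k) {secIdx k ⟨0, z0_lt k⟩ p}) = false := by
      rw [goodF_false_iff]
      intro s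
      rw [sectionOf_flipS, loc_singleton]
      obtain ⟨hs0, hp0⟩ := secIdx_eq_iff.mp (rfl :
        secIdx k ⟨0, z0_lt k⟩ p = secIdx k ⟨0, z0_lt k⟩ p)
      rcases eq_or_ne s (sOf k (secIdx k ⟨0, z0_lt k⟩ p)) with hss | hss
      · rw [if_pos hss, ← hp0, hss, ← hs0, sectionOf_w0_zero]
        exact gpatk_flip_not_good k p
      · rw [if_neg hss, flipS_empty, sectionOf_w0_ne k s (by rw [hs0]; exact hss)]
        exact zero_not_good k
    rw [hflip]
    simp
  calc 2*k+1 = (Finset.univ.image (secIdx k ⟨0, z0_lt k⟩)).card := by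
        rw [Finset.card_image_of_injective _ (fun p p' h => (secIdx_inj h).2)]
        simp
    _ ≤ _ := Finset.card_le_card hsub

lemma sens_eq (k : ℕ) : sens (goodF k) = 2*k+1 := by
  apply le_antisymm
  · exact Finset.sup_le (fun w _ => sensAt_le k w)
  · exact le_trans (sensAt_w0 k) (Finset.le_sup (Finset.mem_univ (w0 k)))

end Stmt7
namespace Stmt7

lemma eq_of_diff_empty {m : ℕ} {x y : Fin m → Bool} (h : diff x y = ∅) : x = y := by
  funext j
  by_contra hc
  have hj : j ∈ diff x y := by simp [diff, hc]
  rw [h] at hj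
  simp at hj

lemma bs_mem_le (k : ℕ) (w : Fin ((2*k+1)^2) → Bool) (m : ℕ)
    (hm : ∃ B : Fin m → Finset (Fin ((2*k+1)^2)), (∀ j, (B j).Nonempty) ∧
      (∀ j₁ j₂, j₁ ≠ j₂ → Disjoint (B j₁) (B j₂)) ∧
      (∀ j, goodF k (flipS w (B j)) ≠ goodF k w)) :
    m ≤ (2*k+1)*(k+1) := by
  obtain ⟨B, hBne, hdisj, hsen⟩ := hm
  cases hf : goodF k w with
  | true =>
    obtain ⟨s0, hs0⟩ := (goodF_true_iff w).mp hf
    have key : ∀ j, ∃ p, secIdx k s0 p ∈ B j := by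
      intro j
      have hflip : goodF k (flipS w (B j)) = false := by
        cases hh : goodF k (flipS w (B j)) with
        | false => rfl
        | true => exact absurd (hh.trans hf.symm) (hsen j)
      have hng := (goodF_false_iff _).mp hflip s0
      by_contra hcon
      push_neg at hcon
      apply hng
      have hloc : loc k (B j) s0 = ∅ := by
        ext p
        simp only [mem_loc, Finset.notMem_empty, iff_false]
        exact hcon p
      rw [sectionOf_flipS, hloc, flipS_empty]
      exact hs0
    choose φ hφ using key
    have hinj : Function.Injective φ := by
      intro j j' h
      by_contra hne'
      exact Finset.disjoint_left.mp (hdisj j j' hne') (hφ j) (h ▸ hφ j')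
    have hle := Fintype.card_le_of_injective φ hinj
    simp only [Fintype.card_fin] at hle
    have : 2*k+1 ≤ (2*k+1)*(k+1) := Nat.le_mul_of_pos_right _ (by omega)
    omega
  | false =>
    have key : ∀ j, ∃ s : Fin (2*k+1), ∃ a : Fin (k+1),
        loc k (B j) s = diff (sectionOf k w s) (gpat k a.val) := by
      intro j
      have hflip : goodF k (flipS w (B j)) = true := by
        cases hh : goodF k (flipS w (B j)) with
        | true => rfl
        | false => exact absurd (hh.trans hf.symm) (hsen j)
      obtain ⟨s, hs⟩ := (goodF_true_iff _).mp hflip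
      rw [sectionOf_flipS] at hs
      obtain ⟨a, hak, ha⟩ := (goodSection_iff _ _).mp hs
      exact ⟨s, ⟨a, by omega⟩, (flipS_eq_iff _ _ _).mp ha⟩
    choose σ ι hσι using key
    have hinj : Function.Injective (fun j => (σ j, ι j)) := by
      intro j j' h
      simp only [Prod.mk.injEq] at h
      obtain ⟨hs, hi⟩ := h
      by_contra hne'
      have hnot : sectionOf k w (σ j) ≠ gpat k (ι j).val := by
        intro hcon
        exact (goodF_false_iff w).mp hf (σ j)
          ((goodSection_iff _ _).mpr ⟨(ι j).val, by omega, hcon⟩)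
      have hne2 : (diff (sectionOf k w (σ j)) (gpat k (ι j).val)).Nonempty := by
        rw [Finset.nonempty_iff_ne_empty]
        intro hcon
        exact hnot (eq_of_diff_empty hcon)
      obtain ⟨p, hp⟩ := hne2
      have hp1 : secIdx k (σ j) p ∈ B j := mem_loc.mp (by rw [hσι j]; exact hp)
      have hp2 : secIdx k (σ j) p ∈ B j' := mem_loc.mp (by
        rw [hs, hσι j', ← hi, ← hs]; exact hp)
      exact Finset.disjoint_left.mp (hdisj j j' hne') hp1 hp2
    have hle := Fintype.card_le_of_injective _ hinj
    simpa [Fintype.card_prod] using hle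

end Stmt7
namespace Stmt7

def blk (k : ℕ) (s : Fin (2*k+1)) (a : Fin (k+1)) : Finset (Fin ((2*k+1)^2)) :=
  (diff (fun _ => false) (gpat k a.val)).image (secIdx k s)

lemma blk_loc (k : ℕ) (s : Fin (2*k+1)) (a : Fin (k+1)) :
    loc k (blk k s a) s = diff (fun _ => false) (gpat k a.val) := by
  ext p
  simp only [mem_loc, blk, Finset.mem_image]
  constructor
  · rintro ⟨q, hq, hqe⟩; rwa [← (secIdx_inj hqe).2]
  · intro hp; exact ⟨p, hp, rfl⟩

lemma mem_diff_false {m : ℕ} {g : Fin m → Bool} {p : Fin m} :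
    p ∈ diff (fun _ => false) g ↔ g p = true := by
  simp [diff]

lemma blk_nonempty (k : ℕ) (s : Fin (2*k+1)) (a : Fin (k+1)) : (blk k s a).Nonempty := by
  have ha := a.isLt
  have h2a : (2*a.val : ℕ) < 2*k+1 := by omega
  refine ⟨secIdx k s ⟨2*a.val, h2a⟩, Finset.mem_image_of_mem _ ?_⟩
  rw [mem_diff_false]
  simp [gpat]

lemma blk_disjoint (k : ℕ) {s s' : Fin (2*k+1)} {a a' : Fin (k+1)}
    (h : (s, a) ≠ (s', a')) : Disjoint (blk k s a) (blk k s' a') := by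
  rw [Finset.disjoint_left]
  rintro x hx hx'
  obtain ⟨q, hq, rfl⟩ := Finset.mem_image.mp hx
  obtain ⟨q', hq', he⟩ := Finset.mem_image.mp hx'
  obtain ⟨hss, hqq⟩ := secIdx_inj he.symm
  subst hss
  subst hqq
  rw [mem_diff_false] at hq hq'
  simp only [gpat, decide_eq_true_eq] at hq hq'
  have haa : a ≠ a' := by rintro rfl; exact h rfl
  have : a.val ≠ a'.val := fun hv => haa (Fin.ext hv)
  omega

def zeroW (k : ℕ) : Fin ((2*k+1)^2) → Bool := fun _ => false

lemma sectionOf_zeroW (k : ℕ) (s : Fin (2*k+1)) :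
    sectionOf k (zeroW k) s = fun _ => false := rfl

lemma goodF_zeroW (k : ℕ) : goodF k (zeroW k) = false := by
  rw [goodF_false_iff]
  intro s
  rw [sectionOf_zeroW]
  exact zero_not_good k

lemma goodF_flip_blk (k : ℕ) (s : Fin (2*k+1)) (a : Fin (k+1)) :
    goodF k (flipS (zeroW k) (blk k s a)) = true := by
  rw [goodF_true_iff]
  refine ⟨s, ?_⟩
  rw [sectionOf_flipS, blk_loc, sectionOf_zeroW]
  have : flipS (fun _ => false) (diff (fun _ => false) (gpat k a.val)) = gpat k a.val :=
    (flipS_eq_iff _ _ _).mpr rfl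
  rw [this]
  exact (goodSection_iff _ _).mpr ⟨a.val, by have := a.isLt; omega, rfl⟩

lemma bs_mem (k : ℕ) : (2*k+1)*(k+1) ∈ {m | ∃ B : Fin m → Finset (Fin ((2*k+1)^2)),
    (∀ j, (B j).Nonempty) ∧ (∀ j₁ j₂, j₁ ≠ j₂ → Disjoint (B j₁) (B j₂)) ∧
    (∀ j, goodF k (flipS (zeroW k) (B j)) ≠ goodF k (zeroW k))} := by
  refine ⟨fun j => blk k (finProdFinEquiv.symm j).1 (finProdFinEquiv.symm j).2, ?_, ?_, ?_⟩
  · intro j; exact blk_nonempty k _ _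
  · intro j₁ j₂ hne
    apply blk_disjoint
    intro hcon
    apply hne
    have h1 := congrArg Prod.fst hcon
    have h2 := congrArg Prod.snd hcon
    exact finProdFinEquiv.symm.injective (Prod.ext h1 h2)
  · intro j
    rw [goodF_flip_blk, goodF_zeroW]
    simp

lemma bs_eq (k : ℕ) : bs (goodF k) = (2*k+1)*(k+1) := by
  apply le_antisymm
  · apply Finset.sup_le
    intro w _
    apply csSup_le
    · exact ⟨0, Fin.elim0, fun j => j.elim0, fun j₁ => j₁.elim0, fun j => j.elim0⟩
    · intro m hm
      exact bs_mem_le k w m hm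
  · refine le_trans ?_ (Finset.le_sup (Finset.mem_univ (zeroW k)))
    apply le_csSup
    · exact ⟨(2*k+1)*(k+1), fun m hm => bs_mem_le k (zeroW k) m hm⟩
    · exact bs_mem k

end Stmt7

theorem stmt7 (k : ℕ) :
    (bs (goodF k) : ℚ) = (1/2) * (sens (goodF k))^2 + (1/2) * (sens (goodF k)) := by
  rw [Stmt7.bs_eq, Stmt7.sens_eq]
  push_cast
  ring
end

section
/- Let k ≥ 0 and let f be the 'good sections' function on n = (2k+1)^2 variables. For any input w with f(w) = 0 and any single section, there is at most one bit within that section whose flip changes the value of f; consequently s(f,w) ≤ 2k+1 for all w with f(w)=0. -/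
lemma secIdx_inj {k : ℕ} {s s' p p' : Fin (2*k+1)} (h : secIdx k s p = secIdx k s' p') :
    s = s' ∧ p = p' := by
  have hv : s.val * (2*k+1) + p.val = s'.val * (2*k+1) + p'.val := congrArg Fin.val h
  have hp : p.val = p'.val := by
    have h1 : p.val % (2*k+1) = p'.val % (2*k+1) := by
      rw [Nat.mul_comm s.val, Nat.mul_comm s'.val] at hv
      rw [← Nat.mul_add_mod (2*k+1) s.val p.val, ← Nat.mul_add_mod (2*k+1) s'.val p'.val, hv]
    rwa [Nat.mod_eq_of_lt p.isLt, Nat.mod_eq_of_lt p'.isLt] at h1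
  have hs : s.val = s'.val := by
    have : s.val * (2*k+1) = s'.val * (2*k+1) := by omega
    exact Nat.eq_of_mul_eq_mul_right (by omega) this
  exact ⟨Fin.ext hs, Fin.ext hp⟩

lemma good_diff {k : ℕ} {y1 y2 : Fin (2*k+1) → Bool} {p1 p2 : Fin (2*k+1)}
    (h1 : goodSection k y1) (h2 : goodSection k y2)
    (hdiff : ∀ j, y1 j ≠ y2 j → j = p1 ∨ j = p2)
    (hne1 : y1 p1 ≠ y2 p1) (hp : p1 ≠ p2) : False := by
  have hpv : p1.val ≠ p2.val := fun h => hp (Fin.ext h)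
  have key : ∀ (a b c : Fin (2*k+1)), a.val ≠ b.val → a.val ≠ c.val → b.val ≠ c.val →
      y1 a ≠ y2 a → y1 b ≠ y2 b → y1 c ≠ y2 c → False := by
    intro a b c hab hac hbc da db dc
    have ha' : a.val = p1.val ∨ a.val = p2.val := by
      rcases hdiff a da with h | h <;> [left; right] <;> exact congrArg Fin.val h
    have hb' : b.val = p1.val ∨ b.val = p2.val := by
      rcases hdiff b db with h | h <;> [left; right] <;> exact congrArg Fin.val h
    have hc' : c.val = p1.val ∨ c.val = p2.val := by
      rcases hdiff c dc with h | h <;> [left; right] <;> exact congrArg Fin.val h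
    omega
  rcases h1 with ⟨i1, hi1, hy1⟩ | hy1 <;> rcases h2 with ⟨i2, hi2, hy2⟩ | hy2
  · by_cases hii : i1 = i2
    · subst hii
      exact hne1 (by rw [hy1 p1, hy2 p1])
    · refine key ⟨2*i1, by omega⟩ ⟨2*i1+1, by omega⟩ ⟨2*i2, by omega⟩
        (by show (2*i1:ℕ) ≠ 2*i1+1; omega) (by show (2*i1:ℕ) ≠ 2*i2; omega)
        (by show (2*i1+1:ℕ) ≠ 2*i2; omega) ?_ ?_ ?_
      · rw [hy1, hy2]; simp only [ne_eq, decide_eq_decide]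
        show ¬((True ∨ (2*i1:ℕ) = 2*i1+1) ↔ ((2*i1:ℕ) = 2*i2 ∨ (2*i1:ℕ) = 2*i2+1))
        intro h
        have := h.mp (Or.inl trivial)
        omega
      · rw [hy1, hy2]; simp only [ne_eq, decide_eq_decide]
        show ¬(((2*i1+1:ℕ) = 2*i1 ∨ True) ↔ ((2*i1+1:ℕ) = 2*i2 ∨ (2*i1+1:ℕ) = 2*i2+1))
        intro h
        have := h.mp (Or.inr trivial)
        omega
      · rw [hy1, hy2]; simp only [ne_eq, decide_eq_decide]
        show ¬(((2*i2:ℕ) = 2*i1 ∨ (2*i2:ℕ) = 2*i1+1) ↔ (True ∨ (2*i2:ℕ) = 2*i2+1))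
        intro h
        have := h.mpr (Or.inl trivial)
        omega
  · refine key ⟨2*i1, by omega⟩ ⟨2*i1+1, by omega⟩ ⟨2*k, by omega⟩
      (by show (2*i1:ℕ) ≠ 2*i1+1; omega) (by show (2*i1:ℕ) ≠ 2*k; omega)
      (by show (2*i1+1:ℕ) ≠ 2*k; omega) ?_ ?_ ?_
    · rw [hy1, hy2]; simp only [ne_eq, decide_eq_decide]
      show ¬((True ∨ (2*i1:ℕ) = 2*i1+1) ↔ (2*i1:ℕ) = 2*k)
      intro h
      have := h.mp (Or.inl trivial)
      omega
    · rw [hy1, hy2]; simp only [ne_eq, decide_eq_decide]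
      show ¬(((2*i1+1:ℕ) = 2*i1 ∨ True) ↔ (2*i1+1:ℕ) = 2*k)
      intro h
      have := h.mp (Or.inr trivial)
      omega
    · rw [hy1, hy2]; simp only [ne_eq, decide_eq_decide]
      show ¬(((2*k:ℕ) = 2*i1 ∨ (2*k:ℕ) = 2*i1+1) ↔ True)
      intro h
      have := h.mpr trivial
      omega
  · refine key ⟨2*i2, by omega⟩ ⟨2*i2+1, by omega⟩ ⟨2*k, by omega⟩
      (by show (2*i2:ℕ) ≠ 2*i2+1; omega) (by show (2*i2:ℕ) ≠ 2*k; omega)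
      (by show (2*i2+1:ℕ) ≠ 2*k; omega) ?_ ?_ ?_
    · rw [hy1, hy2]; simp only [ne_eq, decide_eq_decide]
      show ¬((2*i2:ℕ) = 2*k ↔ (True ∨ (2*i2:ℕ) = 2*i2+1))
      intro h
      have := h.mpr (Or.inl trivial)
      omega
    · rw [hy1, hy2]; simp only [ne_eq, decide_eq_decide]
      show ¬((2*i2+1:ℕ) = 2*k ↔ ((2*i2+1:ℕ) = 2*i2 ∨ True))
      intro h
      have := h.mpr (Or.inr trivial)
      omega
    · rw [hy1, hy2]; simp only [ne_eq, decide_eq_decide]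
      show ¬(True ↔ ((2*k:ℕ) = 2*i2 ∨ (2*k:ℕ) = 2*i2+1))
      intro h
      have := h.mp trivial
      omega
  · exact hne1 (by rw [hy1 p1, hy2 p1])

lemma flip_section_good {k : ℕ} {w : Fin ((2*k+1)^2) → Bool} (hw : goodF k w = false)
    (s p : Fin (2*k+1))
    (h : goodF k (flipS w {secIdx k s p}) ≠ goodF k w) :
    goodSection k (flipS (sectionOf k w s) {p}) := by
  rw [hw] at h
  have h' : goodF k (flipS w {secIdx k s p}) = true := by
    cases hb : goodF k (flipS w {secIdx k s p}) with
    | false => exact absurd hb h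
    | true => rfl
  rw [goodF, decide_eq_true_iff] at h'
  obtain ⟨s', hs'⟩ := h'
  have hnw : ¬ ∃ s'' : Fin (2*k+1), goodSection k (sectionOf k w s'') := by
    intro hex
    simp only [goodF, decide_eq_false_iff_not] at hw
    exact hw hex
  by_cases hss : s' = s
  · subst hss
    have heq : sectionOf k (flipS w {secIdx k s' p}) s' = flipS (sectionOf k w s') {p} := by
      funext q
      simp only [sectionOf, flipS, Finset.mem_singleton]
      by_cases hq : q = p
      · subst hq; simp
      · have : secIdx k s' q ≠ secIdx k s' p := fun hc => hq (secIdx_inj hc).2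
        simp [hq, this]
    rwa [heq] at hs'
  · exfalso
    apply hnw
    refine ⟨s', ?_⟩
    have heq : sectionOf k (flipS w {secIdx k s p}) s' = sectionOf k w s' := by
      funext q
      simp only [sectionOf, flipS, Finset.mem_singleton]
      have : secIdx k s' q ≠ secIdx k s p := fun hc => hss (secIdx_inj hc).1
      simp [this]
    rwa [heq] at hs'

theorem stmt8 (k : ℕ) (w : Fin ((2*k+1)^2) → Bool) (hw : goodF k w = false) :
    (∀ s : Fin (2*k+1),
      (Finset.univ.filter (fun p : Fin (2*k+1) =>
        goodF k (flipS w {secIdx k s p}) ≠ goodF k w)).card ≤ 1) ∧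
    sensAt (goodF k) w ≤ 2*k+1 := by
  have key : ∀ s : Fin (2*k+1),
      (Finset.univ.filter (fun p : Fin (2*k+1) =>
        goodF k (flipS w {secIdx k s p}) ≠ goodF k w)).card ≤ 1 := by
    intro s
    rw [Finset.card_le_one]
    intro p1 hp1 p2 hp2
    simp only [Finset.mem_filter, Finset.mem_univ, true_and] at hp1 hp2
    by_contra hne
    have g1 := flip_section_good hw s p1 hp1
    have g2 := flip_section_good hw s p2 hp2
    refine good_diff g1 g2 ?_ ?_ hne
    · intro j hj
      by_contra hc
      push_neg at hc
      apply hj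
      simp [flipS, hc.1, hc.2]
    · simp [flipS, hne]
  refine ⟨key, ?_⟩
  rw [sensAt]
  set P : Fin ((2*k+1)^2) → Prop := fun i => goodF k (flipS w {i}) ≠ goodF k w with hP
  have hsub : Finset.univ.filter P ⊆
      Finset.univ.biUnion (fun s : Fin (2*k+1) =>
        (Finset.univ.filter (fun p : Fin (2*k+1) => P (secIdx k s p))).image (secIdx k s)) := by
    intro i hi
    simp only [Finset.mem_filter, Finset.mem_univ, true_and] at hi
    have hlt : (2*k+1) > 0 := by omega
    have hi2 : i.val < (2*k+1) * (2*k+1) := by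
      exact lt_of_lt_of_eq i.isLt (pow_two _)
    have hdlt : i.val / (2*k+1) < 2*k+1 := Nat.div_lt_of_lt_mul (by omega)
    set s : Fin (2*k+1) := ⟨i.val / (2*k+1), hdlt⟩
    set p : Fin (2*k+1) := ⟨i.val % (2*k+1), Nat.mod_lt _ hlt⟩
    have hip : secIdx k s p = i := by
      apply Fin.ext
      show (i.val / (2*k+1)) * (2*k+1) + i.val % (2*k+1) = i.val
      rw [Nat.mul_comm]
      exact Nat.div_add_mod _ _
    simp only [Finset.mem_biUnion, Finset.mem_univ, true_and]
    exact ⟨s, Finset.mem_image.mpr ⟨p, by simp only [Finset.mem_filter, Finset.mem_univ, true_and, hip]; exact hi, hip⟩⟩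
  calc (Finset.univ.filter P).card
      ≤ _ := Finset.card_le_card hsub
    _ ≤ ∑ s : Fin (2*k+1), ((Finset.univ.filter (fun p : Fin (2*k+1) => P (secIdx k s p))).image (secIdx k s)).card := Finset.card_biUnion_le
    _ ≤ ∑ s : Fin (2*k+1), 1 := by
        apply Finset.sum_le_sum
        intro s _
        exact le_trans (Finset.card_image_le) (key s)
    _ = 2*k+1 := by simp
end

section
/- Let k ≥ 0 and let f be the 'good sections' function on n = (2k+1)^2 variables. For any input w with f(w) = 1, s(f,w) ≤ 2k+1: if two or more sections of w are good then s(f,w) = 0, and if exactly one section is good then only bits in that section can be sensitive. -/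
lemma sec_unchanged (k : ℕ) (w : Fin ((2*k+1)^2) → Bool) (i : Fin ((2*k+1)^2))
    (s : Fin (2*k+1)) (h : i.val / (2*k+1) ≠ s.val) :
    sectionOf k (flipS w {i}) s = sectionOf k w s := by
  funext p
  have hne : secIdx k s p ≠ i := by
    intro he
    apply h
    rw [← he]
    show (s.val * (2*k+1) + p.val) / (2*k+1) = s.val
    rw [mul_comm, Nat.mul_add_div (Nat.succ_pos _), Nat.div_eq_of_lt p.isLt, Nat.add_zero]
  simp [sectionOf, flipS, hne]

lemma unique_case (k : ℕ) (w : Fin ((2*k+1)^2) → Bool) (hw : goodF k w = true)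
    (s₀ : Fin (2*k+1)) (h₀ : goodSection k (sectionOf k w s₀))
    (i : Fin ((2*k+1)^2)) (hi : goodF k (flipS w {i}) ≠ goodF k w) :
    i.val / (2*k+1) = s₀.val := by
  by_contra h
  apply hi
  rw [hw]
  simp only [goodF, decide_eq_true_eq]
  exact ⟨s₀, by rw [sec_unchanged k w i s₀ h]; exact h₀⟩

theorem stmt9 (k : ℕ) (w : Fin ((2*k+1)^2) → Bool) (hw : goodF k w = true) :
    sensAt (goodF k) w ≤ 2*k+1 ∧
    (∀ s₁ s₂ : Fin (2*k+1), s₁ ≠ s₂ →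
      goodSection k (sectionOf k w s₁) → goodSection k (sectionOf k w s₂) →
      sensAt (goodF k) w = 0) ∧
    (∀ s₀ : Fin (2*k+1), goodSection k (sectionOf k w s₀) →
      (∀ s, goodSection k (sectionOf k w s) → s = s₀) →
      ∀ i : Fin ((2*k+1)^2), goodF k (flipS w {i}) ≠ goodF k w →
        i.val / (2*k+1) = s₀.val) := by
  have key : ∀ s₀ : Fin (2*k+1), goodSection k (sectionOf k w s₀) →
      ∀ i : Fin ((2*k+1)^2), goodF k (flipS w {i}) ≠ goodF k w →
        i.val / (2*k+1) = s₀.val := fun s₀ h₀ i hi => unique_case k w hw s₀ h₀ i hi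
  obtain ⟨s₀, hs₀⟩ : ∃ s, goodSection k (sectionOf k w s) := by
    simpa [goodF] using hw
  refine ⟨?_, ?_, fun s h₀ _ => key s h₀⟩
  · calc sensAt (goodF k) w
        ≤ (Finset.univ.filter (fun i : Fin ((2*k+1)^2) => i.val / (2*k+1) = s₀.val)).card := by
          apply Finset.card_le_card
          intro i hi
          simp only [Finset.mem_filter] at *
          exact ⟨hi.1, key s₀ hs₀ i hi.2⟩
      _ ≤ (Finset.univ : Finset (Fin (2*k+1))).card := by
          apply Finset.card_le_card_of_injOn
            (fun i => (⟨i.val % (2*k+1), Nat.mod_lt _ (Nat.succ_pos _)⟩ : Fin (2*k+1)))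
          · intro _ _; simp
          · intro a ha b hb hab
            simp only [Finset.coe_filter, Set.mem_setOf_eq] at ha hb
            have hmod : a.val % (2*k+1) = b.val % (2*k+1) := by
              simpa [Fin.mk.injEq] using hab
            apply Fin.ext
            have h1 := (Nat.div_add_mod a.val (2*k+1))
            have h2 := (Nat.div_add_mod b.val (2*k+1))
            rw [← h1, ← h2, ha.2, hb.2, hmod]
      _ = 2*k+1 := by simp
  · intro s₁ s₂ hne h₁ h₂
    rw [sensAt, Finset.card_eq_zero, Finset.filter_eq_empty_iff]
    intro i _
    simp only [ne_eq, not_not]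
    by_contra hi
    have e₁ := key s₁ h₁ i hi
    have e₂ := key s₂ h₂ i hi
    exact hne (Fin.ext (e₁ ▸ e₂ ▸ rfl))
end

section
/- For every even perfect square n, Rubinstein's function f on n variables satisfies 2·bs(f) = s(f)^2 = n. -/
def rSecIdx (m : ℕ) (s p : Fin m) : Fin (m^2) :=
  ⟨s.val * m + p.val, by have := s.isLt; have := p.isLt; nlinarith⟩

def rGoodSection (m : ℕ) (x : Fin m → Bool) : Prop :=
  ∃ i < m, 2*i+1 < m ∧ ∀ j : Fin m, x j = decide (j.val = 2*i ∨ j.val = 2*i+1)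

instance (m : ℕ) (x : Fin m → Bool) : Decidable (rGoodSection m x) := by
  unfold rGoodSection; infer_instance

def rubinF (m : ℕ) : (Fin (m^2) → Bool) → Bool :=
  fun w => decide (∃ s : Fin m, rGoodSection m (fun p => w (rSecIdx m s p)))

namespace Rub

variable {m : ℕ}

/-- the pattern with ones exactly at 2i, 2i+1 -/
def pat (m i : ℕ) : Fin m → Bool := fun j => decide (j.val = 2*i ∨ j.val = 2*i+1)

/-- section s of a word -/
def sec (m : ℕ) (w : Fin (m^2) → Bool) (s : Fin m) : Fin m → Bool :=
  fun p => w (rSecIdx m s p)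

lemma good_iff (x : Fin m → Bool) : rGoodSection m x ↔ ∃ i, 2*i+1 < m ∧ x = pat m i := by
  constructor
  · rintro ⟨i, -, h2, h3⟩; exact ⟨i, h2, funext h3⟩
  · rintro ⟨i, h2, h3⟩; exact ⟨i, by omega, h2, fun j => by rw [h3]; rfl⟩

lemma rubinF_true (w : Fin (m^2) → Bool) :
    rubinF m w = true ↔ ∃ s, rGoodSection m (sec m w s) := by
  unfold rubinF
  rw [decide_eq_true_eq]
  exact Iff.rfl

lemma rubinF_false (w : Fin (m^2) → Bool) :
    rubinF m w = false ↔ ∀ s, ¬ rGoodSection m (sec m w s) := by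
  unfold rubinF
  rw [decide_eq_false_iff_not, not_exists]
  exact Iff.rfl

lemma rSecIdx_val (s p : Fin m) : (rSecIdx m s p).val = s.val * m + p.val := rfl

lemma rSecIdx_div (s p : Fin m) : (rSecIdx m s p).val / m = s.val := by
  have hm : 0 < m := s.pos
  rw [rSecIdx_val, Nat.add_comm, Nat.add_mul_div_right _ _ hm, Nat.div_eq_of_lt p.isLt,
    Nat.zero_add]

lemma rSecIdx_mod (s p : Fin m) : (rSecIdx m s p).val % m = p.val := by
  rw [rSecIdx_val, Nat.add_comm, Nat.add_mul_mod_self_right, Nat.mod_eq_of_lt p.isLt]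

lemma rSecIdx_inj {s s' p p' : Fin m} (h : rSecIdx m s p = rSecIdx m s' p') :
    s = s' ∧ p = p' := by
  have hv := congrArg Fin.val h
  have h1 : (rSecIdx m s p).val / m = (rSecIdx m s' p').val / m := by rw [hv]
  have h2 : (rSecIdx m s p).val % m = (rSecIdx m s' p').val % m := by rw [hv]
  rw [rSecIdx_div, rSecIdx_div] at h1
  rw [rSecIdx_mod, rSecIdx_mod] at h2
  exact ⟨Fin.ext h1, Fin.ext h2⟩

lemma sec_flip (w : Fin (m^2) → Bool) (B : Finset (Fin (m^2))) (s : Fin m) :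
    sec m (flipS w B) s
      = flipS (sec m w s) (Finset.univ.filter fun p => rSecIdx m s p ∈ B) := by
  funext p; simp [sec, flipS]

lemma sec_flip_of_miss (w : Fin (m^2) → Bool) (B : Finset (Fin (m^2))) (s : Fin m)
    (h : ∀ p : Fin m, rSecIdx m s p ∉ B) :
    sec m (flipS w B) s = sec m w s := by
  funext p; simp [sec, flipS, h p]

lemma flipS_cancel {n : ℕ} {x : Fin n → Bool} {F1 F2 : Finset (Fin n)}
    (h : flipS x F1 = flipS x F2) : F1 = F2 := by
  ext p
  have hp := congrFun h p
  by_cases h1 : p ∈ F1 <;> by_cases h2 : p ∈ F2 <;>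
    simp [flipS, h1, h2] at hp ⊢

lemma flipS_empty {n : ℕ} (x : Fin n → Bool) : flipS x ∅ = x := by
  funext p; simp [flipS]

lemma pat_ne_at {i1 i2 v : ℕ} (hv : v < m) (h : v = 2*i1 ∨ v = 2*i1+1) (hne : i1 ≠ i2) :
    pat m i1 ⟨v, hv⟩ ≠ pat m i2 ⟨v, hv⟩ := by
  simp only [pat, ne_eq, decide_eq_decide]
  omega

lemma allF_not_good : ¬ rGoodSection m (fun _ : Fin m => false) := by
  rw [good_iff]
  rintro ⟨i, hi, he⟩
  have := congrFun he ⟨2*i, by omega⟩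
  simp [pat] at this

end Rub

namespace Rub

variable {m : ℕ}

/-- flipping a single bit of a pattern never gives a pattern -/
lemma flip_pat_single_ne {i0 j : ℕ} (h0 : 2*i0+1 < m) (hj : 2*j+1 < m) (p : Fin m)
    (e : flipS (pat m i0) {p} = pat m j) : False := by
  have hout : ∀ r : Fin m, r ≠ p → pat m i0 r = pat m j r := by
    intro r hr
    have hc := congrFun e r
    simpa [flipS, hr] using hc
  have hat : pat m i0 p ≠ pat m j p := by
    have hc := congrFun e p
    simp only [flipS, Finset.mem_singleton, if_pos rfl] at hc
    rw [← hc]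
    exact (Bool.not_ne_self _).symm
  have hij : i0 ≠ j := by rintro rfl; exact hat rfl
  have h1 : 2*i0 < m := by omega
  have e1 : (⟨2*i0, h1⟩ : Fin m) = p := by
    by_contra hcon; exact pat_ne_at h1 (Or.inl rfl) hij (hout _ hcon)
  have e2 : (⟨2*i0+1, h0⟩ : Fin m) = p := by
    by_contra hcon; exact pat_ne_at h0 (Or.inr rfl) hij (hout _ hcon)
  have := congrArg Fin.val (e1.trans e2.symm)
  simp at this

/-- two single-bit flips of the same section giving patterns must be the same bit -/
lemma flip_single {x : Fin m → Bool} {p1 p2 : Fin m} {i1 i2 : ℕ}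
    (hb1 : 2*i1+1 < m) (hb2 : 2*i2+1 < m)
    (e1 : flipS x {p1} = pat m i1) (e2 : flipS x {p2} = pat m i2) : p1 = p2 := by
  by_contra hne
  have hout : ∀ r : Fin m, r ≠ p1 → r ≠ p2 → pat m i1 r = pat m i2 r := by
    intro r h1 h2
    have c1 := congrFun e1 r
    have c2 := congrFun e2 r
    simp only [flipS, Finset.mem_singleton, if_neg h1] at c1
    simp only [flipS, Finset.mem_singleton, if_neg h2] at c2
    rw [← c1, ← c2]
  have hi : i1 ≠ i2 := by
    rintro rfl
    have hFF : ({p1} : Finset (Fin m)) = {p2} := flipS_cancel (e1.trans e2.symm)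
    exact hne (by simpa using hFF)
  have h1m : 2*i1 < m := by omega
  have h2m : 2*i2 < m := by omega
  have key : ∀ (v : ℕ) (hv : v < m), pat m i1 ⟨v, hv⟩ ≠ pat m i2 ⟨v, hv⟩ →
      v = p1.val ∨ v = p2.val := by
    intro v hv hnev
    by_contra hc
    push_neg at hc
    refine hnev (hout ⟨v, hv⟩ ?_ ?_)
    · intro h; exact hc.1 (congrArg Fin.val h)
    · intro h; exact hc.2 (congrArg Fin.val h)
  have k1 := key (2*i1) h1m (pat_ne_at h1m (Or.inl rfl) hi)
  have k2 := key (2*i1+1) hb1 (pat_ne_at hb1 (Or.inr rfl) hi)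
  have k3 := key (2*i2) h2m (pat_ne_at h2m (Or.inl rfl) hi.symm).symm
  have hpv : p1.val ≠ p2.val := fun h => hne (Fin.ext h)
  omega

end Rub

namespace Rub

variable {m : ℕ}

lemma val_div_lt {i : Fin (m^2)} (hm : 0 < m) : i.val / m < m := by
  have hi : i.val < m * m := lt_of_lt_of_le i.isLt (pow_two m).le
  exact Nat.div_lt_iff_lt_mul hm |>.mpr hi

lemma decode (hm : 0 < m) (i : Fin (m^2)) :
    rSecIdx m ⟨i.val / m, val_div_lt hm⟩ ⟨i.val % m, Nat.mod_lt _ hm⟩ = i := by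
  apply Fin.ext
  rw [rSecIdx_val]
  exact Nat.div_add_mod' i.val m

lemma sensAt_le (w : Fin (m^2) → Bool) : sensAt (rubinF m) w ≤ m := by
  rcases Nat.eq_zero_or_pos m with rfl | hm
  · calc sensAt (rubinF 0) w ≤ (Finset.univ : Finset (Fin (0^2))).card :=
          Finset.card_filter_le _ _
      _ = 0 := by simp
  · unfold sensAt
    cases hv : rubinF m w
    · -- f(w) = false
      have hno := (rubinF_false w).mp hv
      have key : ∀ i : Fin (m^2), rubinF m (flipS w {i}) ≠ false →
          ∃ j, 2*j+1 < m ∧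
            flipS (sec m w ⟨i.val / m, val_div_lt hm⟩) {(⟨i.val % m, Nat.mod_lt _ hm⟩ : Fin m)}
              = pat m j := by
        intro i hi
        have ht : rubinF m (flipS w {i}) = true := by
          cases hb : rubinF m (flipS w {i}) with
          | false => exact absurd hb hi
          | true => rfl
        obtain ⟨s', hg⟩ := (rubinF_true _).mp ht
        have hs' : s' = ⟨i.val / m, val_div_lt hm⟩ := by
          by_contra hc
          have hmiss : ∀ p : Fin m, rSecIdx m s' p ∉ ({i} : Finset (Fin (m^2))) := by
            intro p hp
            rw [Finset.mem_singleton] at hp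
            apply hc
            apply Fin.ext
            have hd := rSecIdx_div s' p
            rw [hp] at hd
            exact hd.symm
          rw [sec_flip_of_miss w _ s' hmiss] at hg
          exact hno s' hg
        subst hs'
        rw [sec_flip] at hg
        obtain ⟨j, hj, he⟩ := (good_iff _).mp hg
        refine ⟨j, hj, ?_⟩
        have hFeq : (Finset.univ.filter fun p : Fin m =>
            rSecIdx m ⟨i.val / m, val_div_lt hm⟩ p ∈ ({i} : Finset (Fin (m^2))))
            = {(⟨i.val % m, Nat.mod_lt _ hm⟩ : Fin m)} := by
          ext p
          simp only [Finset.mem_filter, Finset.mem_univ, true_and, Finset.mem_singleton]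
          constructor
          · intro hp
            exact (rSecIdx_inj (h := hp.trans (decode hm i).symm)).2
          · rintro rfl
            exact decode hm i
        rw [hFeq] at he
        exact he
      have hinj : Set.InjOn (fun i : Fin (m^2) => (⟨i.val / m, val_div_lt hm⟩ : Fin m))
          ↑(Finset.univ.filter fun i : Fin (m^2) => rubinF m (flipS w {i}) ≠ false) := by
        intro a1 h1 a2 h2 heq
        simp only [Finset.coe_filter, Set.mem_setOf_eq, Finset.mem_univ, true_and] at h1 h2
        obtain ⟨j1, hj1, he1⟩ := key a1 h1
        obtain ⟨j2, hj2, he2⟩ := key a2 h2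
        have hdv : a1.val / m = a2.val / m := congrArg Fin.val heq
        rw [show (⟨a2.val / m, val_div_lt hm⟩ : Fin m) = ⟨a1.val / m, val_div_lt hm⟩ from
          Fin.ext hdv.symm] at he2
        have hpp := flip_single hj1 hj2 he1 he2
        have hmv : a1.val % m = a2.val % m := congrArg Fin.val hpp
        have d1 : m * (a1.val / m) + a1.val % m = a1.val := Nat.div_add_mod a1.val m
        have d2 : m * (a2.val / m) + a2.val % m = a2.val := Nat.div_add_mod a2.val m
        apply Fin.ext
        rw [← d1, ← d2, hdv, hmv]
      calc (Finset.univ.filter fun i : Fin (m^2) =>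
              rubinF m (flipS w {i}) ≠ false).card
          ≤ (Finset.univ : Finset (Fin m)).card :=
            Finset.card_le_card_of_injOn _ (fun a _ => Finset.mem_univ _) hinj
        _ = m := by simp
    · -- f(w) = true
      obtain ⟨s0, hs0⟩ := (rubinF_true w).mp hv
      have hsec : ∀ i : Fin (m^2), rubinF m (flipS w {i}) ≠ true →
          i.val / m = s0.val := by
        intro i hi
        by_contra hc
        have hmiss : ∀ p : Fin m, rSecIdx m s0 p ∉ ({i} : Finset (Fin (m^2))) := by
          intro p hp
          rw [Finset.mem_singleton] at hp
          apply hc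
          have hd := rSecIdx_div s0 p
          rw [hp] at hd
          exact hd
        have heq := sec_flip_of_miss w _ s0 hmiss
        have ht : rubinF m (flipS w {i}) = true := (rubinF_true _).mpr ⟨s0, heq ▸ hs0⟩
        exact hi ht
      have hinj : Set.InjOn (fun i : Fin (m^2) => (⟨i.val % m, Nat.mod_lt _ hm⟩ : Fin m))
          ↑(Finset.univ.filter fun i : Fin (m^2) => rubinF m (flipS w {i}) ≠ true) := by
        intro a1 h1 a2 h2 heq
        simp only [Finset.coe_filter, Set.mem_setOf_eq, Finset.mem_univ, true_and] at h1 h2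
        have hd1 := hsec a1 h1
        have hd2 := hsec a2 h2
        have hdv : a1.val / m = a2.val / m := hd1.trans hd2.symm
        have hmv : a1.val % m = a2.val % m := congrArg Fin.val heq
        have d1 : m * (a1.val / m) + a1.val % m = a1.val := Nat.div_add_mod a1.val m
        have d2 : m * (a2.val / m) + a2.val % m = a2.val := Nat.div_add_mod a2.val m
        apply Fin.ext
        rw [← d1, ← d2, hdv, hmv]
      calc (Finset.univ.filter fun i : Fin (m^2) =>
              rubinF m (flipS w {i}) ≠ true).card
          ≤ (Finset.univ : Finset (Fin m)).card :=
            Finset.card_le_card_of_injOn _ (fun a _ => Finset.mem_univ _) hinj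
        _ = m := by simp

end Rub

namespace Rub

variable {m : ℕ}

lemma self_le_sq (p : Fin m) : (p.val : ℕ) < m^2 :=
  lt_of_lt_of_le p.isLt (Nat.le_self_pow two_ne_zero m)

lemma sens_lower (hm2 : 2 ≤ m) : m ≤ sens (rubinF m) := by
  classical
  set w1 : Fin (m^2) → Bool := fun idx => decide (idx.val = 0 ∨ idx.val = 1) with hw1
  have hm : 0 < m := by omega
  have hsec0 : sec m w1 ⟨0, hm⟩ = pat m 0 := by
    funext p
    show decide ((rSecIdx m ⟨0,hm⟩ p).val = 0 ∨ (rSecIdx m ⟨0,hm⟩ p).val = 1)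
        = decide (p.val = 2*0 ∨ p.val = 2*0+1)
    rw [decide_eq_decide, rSecIdx_val]
    show 0 * m + p.val = 0 ∨ 0 * m + p.val = 1 ↔ _
    omega
  have hsecs : ∀ s : Fin m, s.val ≠ 0 → sec m w1 s = fun _ => false := by
    intro s hs
    funext p
    show decide ((rSecIdx m s p).val = 0 ∨ (rSecIdx m s p).val = 1) = false
    rw [decide_eq_false_iff_not, rSecIdx_val]
    have hsm : m ≤ s.val * m := Nat.le_mul_of_pos_left m (by omega)
    omega
  have hT : rubinF m w1 = true :=
    (rubinF_true _).mpr ⟨⟨0, hm⟩, (good_iff _).mpr ⟨0, by omega, hsec0⟩⟩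
  have hsens : ∀ p : Fin m,
      rubinF m (flipS w1 {(⟨p.val, self_le_sq p⟩ : Fin (m^2))}) = false := by
    intro p
    rw [rubinF_false]
    intro s
    by_cases hs : s.val = 0
    · have hseq : s = ⟨0, hm⟩ := Fin.ext hs
      subst hseq
      rw [sec_flip]
      have hF : (Finset.univ.filter fun q : Fin m =>
          rSecIdx m ⟨0,hm⟩ q ∈ ({(⟨p.val, self_le_sq p⟩ : Fin (m^2))} : Finset (Fin (m^2))))
          = {p} := by
        ext q
        simp only [Finset.mem_filter, Finset.mem_univ, true_and, Finset.mem_singleton]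
        rw [Fin.ext_iff, Fin.ext_iff, rSecIdx_val]
        show 0 * m + q.val = p.val ↔ _
        omega
      rw [hF, hsec0]
      intro hg
      obtain ⟨j, hj, he⟩ := (good_iff _).mp hg
      exact flip_pat_single_ne (by omega) hj p he
    · have hmiss : ∀ q : Fin m,
          rSecIdx m s q ∉ ({(⟨p.val, self_le_sq p⟩ : Fin (m^2))} : Finset (Fin (m^2))) := by
        intro q hq
        rw [Finset.mem_singleton, Fin.ext_iff, rSecIdx_val] at hq
        have hsm : m ≤ s.val * m := Nat.le_mul_of_pos_left m (by omega)
        have := p.isLt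
        simp only [Fin.val_mk] at hq
        omega
      rw [sec_flip_of_miss w1 _ s hmiss, hsecs s hs]
      exact allF_not_good
  have hcard : (Finset.univ : Finset (Fin m)).card ≤
      (Finset.univ.filter fun i : Fin (m^2) =>
        rubinF m (flipS w1 {i}) ≠ rubinF m w1).card := by
    apply Finset.card_le_card_of_injOn
      (fun p : Fin m => (⟨p.val, self_le_sq p⟩ : Fin (m^2)))
    · intro p _
      rw [Finset.mem_coe, Finset.mem_filter]
      refine ⟨Finset.mem_univ _, ?_⟩
      rw [hsens p, hT]
      simp
    · intro a _ b _ h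
      simpa [Fin.ext_iff] using h
  calc m = (Finset.univ : Finset (Fin m)).card := by simp
    _ ≤ sensAt (rubinF m) w1 := hcard
    _ ≤ sens (rubinF m) := Finset.le_sup (Finset.mem_univ w1)

/-- the set of block-sensitivity witnesses -/
def famS {n : ℕ} (f : (Fin n → Bool) → Bool) (w : Fin n → Bool) : Set ℕ :=
  {k | ∃ B : Fin k → Finset (Fin n), (∀ j, (B j).Nonempty) ∧
    (∀ j₁ j₂, j₁ ≠ j₂ → Disjoint (B j₁) (B j₂)) ∧ (∀ j, f (flipS w (B j)) ≠ f w)}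

lemma bsAt_eq {n : ℕ} (f : (Fin n → Bool) → Bool) (w : Fin n → Bool) :
    bsAt f w = sSup (famS f w) := rfl

lemma zero_mem_famS {n : ℕ} (f : (Fin n → Bool) → Bool) (w : Fin n → Bool) :
    0 ∈ famS f w :=
  ⟨fun j => j.elim0, fun j => j.elim0, fun j => j.elim0, fun j => j.elim0⟩

lemma famS_le {n : ℕ} {f : (Fin n → Bool) → Bool} {w : Fin n → Bool} {k : ℕ}
    (hk : k ∈ famS f w) : k ≤ n := by
  obtain ⟨B, hne, hdis, -⟩ := hk
  have hinj : Function.Injective (fun j : Fin k => (hne j).choose) := by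
    intro j1 j2 h
    by_contra hne'
    have h1 := (hne j1).choose_spec
    have h2 := (hne j2).choose_spec
    rw [show (hne j1).choose = (hne j2).choose from h] at h1
    exact Finset.disjoint_left.mp (hdis _ _ hne') h1 h2
  simpa using Fintype.card_le_of_injective _ hinj

lemma bsAt_mem {n : ℕ} (f : (Fin n → Bool) → Bool) (w : Fin n → Bool) :
    bsAt f w ∈ famS f w :=
  Nat.sSup_mem ⟨0, zero_mem_famS f w⟩ ⟨n, fun _ hk => famS_le hk⟩

lemma le_bsAt {n : ℕ} {f : (Fin n → Bool) → Bool} {w : Fin n → Bool} {k : ℕ}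
    (hk : k ∈ famS f w) : k ≤ bsAt f w :=
  le_csSup ⟨n, fun _ h => famS_le h⟩ hk

end Rub

namespace Rub

variable {m : ℕ}

lemma bsAt_le (hme : Even m) (w : Fin (m^2) → Bool) :
    bsAt (rubinF m) w ≤ m * (m / 2) := by
  classical
  have hm2 : m % 2 = 0 := Nat.even_iff.mp hme
  have hmem := bsAt_mem (rubinF m) w
  set k := bsAt (rubinF m) w with hk
  obtain ⟨B, hne, hdis, hsens⟩ := hmem
  cases hv : rubinF m w
  · -- f(w) = false
    have hno := (rubinF_false w).mp hv
    have key : ∀ j : Fin k, ∃ (s : Fin m) (i : ℕ), 2*i+1 < m ∧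
        flipS (sec m w s) (Finset.univ.filter fun p => rSecIdx m s p ∈ B j) = pat m i := by
      intro j
      have hj := hsens j
      rw [hv] at hj
      have ht : rubinF m (flipS w (B j)) = true := by
        cases hb : rubinF m (flipS w (B j)) with
        | false => exact absurd hb hj
        | true => rfl
      obtain ⟨s, hg⟩ := (rubinF_true _).mp ht
      rw [sec_flip] at hg
      obtain ⟨i, hi, he⟩ := (good_iff _).mp hg
      exact ⟨s, i, hi, he⟩
    choose s i hb he using key
    have hilt : ∀ j, i j < m / 2 := fun j => by have := hb j; omega
    have hinj : Function.Injective
        (fun j => ((s j, ⟨i j, hilt j⟩) : Fin m × Fin (m / 2))) := by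
      intro j1 j2 hj
      by_contra hne'
      have hs : s j1 = s j2 := congrArg Prod.fst hj
      have hii : i j1 = i j2 := congrArg Fin.val (congrArg Prod.snd hj)
      have e1 := he j1
      have e2 := he j2
      rw [← hs, ← hii] at e2
      have hFeq := flipS_cancel (e1.trans e2.symm)
      have hF1ne : (Finset.univ.filter fun p => rSecIdx m (s j1) p ∈ B j1).Nonempty := by
        rw [Finset.nonempty_iff_ne_empty]
        intro h0
        have he1 := he j1
        rw [h0, flipS_empty] at he1
        exact hno (s j1) ((good_iff _).mpr ⟨i j1, hb j1, he1⟩)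
      obtain ⟨p, hp⟩ := hF1ne
      have hp2 := hFeq ▸ hp
      rw [Finset.mem_filter] at hp hp2
      exact Finset.disjoint_left.mp (hdis _ _ hne') hp.2 hp2.2
    have := Fintype.card_le_of_injective _ hinj
    simpa using this
  · -- f(w) = true
    obtain ⟨s0, hs0⟩ := (rubinF_true w).mp hv
    have hm2' : 2 ≤ m := by have := s0.pos; omega
    have key : ∀ j : Fin k, ∃ p : Fin m, rSecIdx m s0 p ∈ B j := by
      intro j
      by_contra hc
      push_neg at hc
      have heq := sec_flip_of_miss w (B j) s0 hc
      have ht : rubinF m (flipS w (B j)) = true := (rubinF_true _).mpr ⟨s0, heq ▸ hs0⟩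
      have := hsens j
      rw [ht, hv] at this
      exact this rfl
    choose p hp using key
    have hinj : Function.Injective p := by
      intro j1 j2 hj
      by_contra hne'
      have h2 := hp j2
      rw [← hj] at h2
      exact Finset.disjoint_left.mp (hdis _ _ hne') (hp j1) h2
    have hkm : k ≤ m := by simpa using Fintype.card_le_of_injective _ hinj
    calc k ≤ m := hkm
      _ ≤ m * (m / 2) := Nat.le_mul_of_pos_right m (by omega)

end Rub

namespace Rub

variable {m : ℕ}

lemma bs_lower (hme : Even m) : m * (m / 2) ≤ bs (rubinF m) := by
  classical
  rcases Nat.eq_zero_or_pos m with rfl | hmpos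
  · simp
  have hm2 : m % 2 = 0 := Nat.even_iff.mp hme
  set w0 : Fin (m^2) → Bool := fun _ => false with hw0
  have hsec0 : ∀ s : Fin m, sec m w0 s = fun _ => false := fun s => rfl
  have hF : rubinF m w0 = false := (rubinF_false _).mpr (fun s => by
    rw [hsec0 s]; exact allF_not_good)
  set e := (finProdFinEquiv : Fin m × Fin (m / 2) ≃ Fin (m * (m / 2))) with hee
  have hlt : ∀ i : Fin (m / 2), 2 * i.val + 1 < m := fun i => by
    have := i.isLt; omega
  have hlt' : ∀ i : Fin (m / 2), 2 * i.val < m := fun i => by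
    have := hlt i; omega
  set B : Fin (m * (m / 2)) → Finset (Fin (m^2)) := fun j =>
    {rSecIdx m (e.symm j).1 ⟨2 * (e.symm j).2.val, hlt' (e.symm j).2⟩,
     rSecIdx m (e.symm j).1 ⟨2 * (e.symm j).2.val + 1, hlt (e.symm j).2⟩} with hB
  have hmemB : ∀ (j : Fin (m * (m / 2))) (a : Fin (m^2)), a ∈ B j ↔
      a = rSecIdx m (e.symm j).1 ⟨2 * (e.symm j).2.val, hlt' (e.symm j).2⟩ ∨
      a = rSecIdx m (e.symm j).1 ⟨2 * (e.symm j).2.val + 1, hlt (e.symm j).2⟩ := by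
    intro j a
    rw [hB]
    simp [Finset.mem_insert, Finset.mem_singleton]
  have hmem : m * (m / 2) ∈ famS (rubinF m) w0 := by
    refine ⟨B, ?_, ?_, ?_⟩
    · intro j
      exact ⟨_, (hmemB j _).mpr (Or.inl rfl)⟩
    · intro j1 j2 hne
      rw [Finset.disjoint_left]
      intro a h1 h2
      rw [hmemB] at h1 h2
      apply hne
      apply e.symm.injective
      have hpr : e.symm j1 = e.symm j2 := by
        rcases h1 with h1 | h1 <;> rcases h2 with h2 | h2 <;>
        · obtain ⟨hs, hpp⟩ := rSecIdx_inj (h1.symm.trans h2)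
          have hpv := congrArg Fin.val hpp
          simp only [Fin.val_mk] at hpv
          have hiv : (e.symm j1).2.val = (e.symm j2).2.val := by omega
          exact Prod.ext hs (Fin.ext hiv)
      exact hpr
    · intro j
      have ht : rubinF m (flipS w0 (B j)) = true := by
        rw [rubinF_true]
        refine ⟨(e.symm j).1, (good_iff _).mpr ⟨(e.symm j).2.val, hlt _, ?_⟩⟩
        rw [sec_flip]
        funext q
        have hmemiff : (rSecIdx m (e.symm j).1 q ∈ B j) ↔
            (q.val = 2 * (e.symm j).2.val ∨ q.val = 2 * (e.symm j).2.val + 1) := by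
          rw [hmemB]
          constructor
          · rintro (h | h)
            · obtain ⟨-, hq⟩ := rSecIdx_inj h
              exact Or.inl (congrArg Fin.val hq)
            · obtain ⟨-, hq⟩ := rSecIdx_inj h
              exact Or.inr (congrArg Fin.val hq)
          · rintro (h | h)
            · exact Or.inl (by congr 1; exact Fin.ext h)
            · exact Or.inr (by congr 1; exact Fin.ext h)
        show flipS (sec m w0 _) _ q = pat m _ q
        rw [hsec0]
        simp only [flipS, Finset.mem_filter, Finset.mem_univ, true_and, pat]
        by_cases hq : q.val = 2 * (e.symm j).2.val ∨ q.val = 2 * (e.symm j).2.val + 1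
        · rw [if_pos (hmemiff.mpr hq), decide_eq_true hq]
          rfl
        · rw [if_neg (fun hc => hq (hmemiff.mp hc))]
          exact (decide_eq_false hq).symm
      rw [ht, hF]
      simp
  calc m * (m / 2) ≤ bsAt (rubinF m) w0 := le_bsAt hmem
    _ ≤ bs (rubinF m) := Finset.le_sup (Finset.mem_univ w0)

end Rub

theorem stmt10 (m : ℕ) (heven : Even (m^2)) :
    2 * bs (rubinF m) = (sens (rubinF m))^2 ∧ (sens (rubinF m))^2 = m^2 := by
  have hme : Even m := by
    rcases Nat.eq_zero_or_pos m with rfl | h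
    · exact Even.zero
    · exact (Nat.even_pow.mp heven).1
  have hsens : sens (rubinF m) = m := by
    apply le_antisymm
    · exact Finset.sup_le (fun w _ => Rub.sensAt_le w)
    · rcases Nat.eq_zero_or_pos m with rfl | h
      · simp
      · refine Rub.sens_lower ?_
        rcases hme with ⟨t, ht⟩
        omega
  have hbs : bs (rubinF m) = m * (m / 2) :=
    le_antisymm (Finset.sup_le fun w _ => Rub.bsAt_le hme w) (Rub.bs_lower hme)
  have h2 : 2 * (m / 2) = m := by
    have := Nat.even_iff.mp hme
    omega
  constructor
  · rw [hbs, hsens]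
    calc 2 * (m * (m / 2)) = m * (2 * (m / 2)) := by ring
      _ = m * m := by rw [h2]
      _ = m ^ 2 := (pow_two m).symm
  · rw [hsens]
end

section
/- There exists a sequence of Boolean functions f_k (on (2k+1)^2 variables) with s(f_k) → ∞ and bs(f_k) = (1/2)s(f_k)^2 + (1/2)s(f_k) for all k; in particular the separation bs(f) = Θ(s(f)^2) is achievable. -/
namespace Stmt13

variable {k : ℕ}

def pat (k i : ℕ) : Fin (2*k+1) → Bool :=
  fun j => if i < k then decide (j.val = 2*i ∨ j.val = 2*i+1) else decide (j.val = 2*k)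

lemma goodSection_iff (x : Fin (2*k+1) → Bool) :
    goodSection k x ↔ ∃ i ≤ k, x = pat k i := by
  constructor
  · rintro (⟨i, hi, hx⟩ | hx)
    · exact ⟨i, le_of_lt hi, funext fun j => by simp [pat, hi, hx j]⟩
    · exact ⟨k, le_refl k, funext fun j => by simp [pat, hx j]⟩
  · rintro ⟨i, hi, rfl⟩
    rcases lt_or_eq_of_le hi with h | rfl
    · exact Or.inl ⟨i, h, fun j => by simp [pat, h]⟩
    · exact Or.inr fun j => by simp [pat]

lemma secIdx_inj {s s' p p' : Fin (2*k+1)} (h : secIdx k s p = secIdx k s' p') :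
    s = s' ∧ p = p' := by
  have hv : s.val * (2*k+1) + p.val = s'.val * (2*k+1) + p'.val := congrArg Fin.val h
  have hp := p.isLt
  have hp' := p'.isLt
  have hpv : p.val = p'.val := by
    have h1 : (s.val * (2*k+1) + p.val) % (2*k+1) = p.val := by
      rw [Nat.mul_comm, Nat.mul_add_mod, Nat.mod_eq_of_lt hp]
    have h2 : (s'.val * (2*k+1) + p'.val) % (2*k+1) = p'.val := by
      rw [Nat.mul_comm, Nat.mul_add_mod, Nat.mod_eq_of_lt hp']
    rw [← hv] at h2
    omega
  have hsv : s.val = s'.val := by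
    have : s.val * (2*k+1) = s'.val * (2*k+1) := by omega
    exact Nat.eq_of_mul_eq_mul_right (by omega) this
  exact ⟨Fin.ext hsv, Fin.ext hpv⟩

def secOf (k : ℕ) (i : Fin ((2*k+1)^2)) : Fin (2*k+1) :=
  ⟨i.val / (2*k+1), by
    have := i.isLt
    apply Nat.div_lt_of_lt_mul
    calc i.val < (2*k+1)^2 := i.isLt
    _ = (2*k+1) * (2*k+1) := by ring⟩

def posOf (k : ℕ) (i : Fin ((2*k+1)^2)) : Fin (2*k+1) :=
  ⟨i.val % (2*k+1), Nat.mod_lt _ (by omega)⟩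

lemma secIdx_secOf (i : Fin ((2*k+1)^2)) : secIdx k (secOf k i) (posOf k i) = i := by
  apply Fin.ext
  show i.val / (2*k+1) * (2*k+1) + i.val % (2*k+1) = i.val
  rw [Nat.mul_comm, Nat.div_add_mod]

def pull (k : ℕ) (S : Finset (Fin ((2*k+1)^2))) (s : Fin (2*k+1)) : Finset (Fin (2*k+1)) :=
  Finset.univ.filter (fun p => secIdx k s p ∈ S)

lemma sectionOf_flipS (w : Fin ((2*k+1)^2) → Bool) (S : Finset (Fin ((2*k+1)^2))) (s : Fin (2*k+1)) :
    sectionOf k (flipS w S) s = flipS (sectionOf k w s) (pull k S s) := by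
  funext p
  simp [sectionOf, flipS, pull]

lemma flipS_empty (x : Fin (2*k+1) → Bool) : flipS x (∅ : Finset (Fin (2*k+1))) = x := by
  funext p; simp [flipS]

lemma flip_eq_pat {x : Fin (2*k+1) → Bool} {T : Finset (Fin (2*k+1))} {i : ℕ}
    (h : flipS x T = pat k i) : T = Finset.univ.filter (fun j => x j ≠ pat k i j) := by
  ext j
  have hj := congrFun h j
  simp only [flipS] at hj
  simp only [Finset.mem_filter, Finset.mem_univ, true_and]
  by_cases hT : j ∈ T
  · simp only [hT, if_true] at hj
    simp [hT, ← hj]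
  · simp only [hT, if_false] at hj
    simp [hT, hj]


lemma goodF_true_iff (w : Fin ((2*k+1)^2) → Bool) :
    goodF k w = true ↔ ∃ s, goodSection k (sectionOf k w s) := by
  simp [goodF]

lemma goodF_false_iff (w : Fin ((2*k+1)^2) → Bool) :
    goodF k w = false ↔ ∀ s, ¬ goodSection k (sectionOf k w s) := by
  simp [goodF]

lemma pull_singleton_self (s p : Fin (2*k+1)) :
    pull k ({secIdx k s p} : Finset (Fin ((2*k+1)^2))) s = {p} := by
  ext q
  simp only [pull, Finset.mem_filter, Finset.mem_univ, true_and, Finset.mem_singleton]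
  constructor
  · intro h; exact (secIdx_inj h).2
  · rintro rfl; rfl

lemma pull_singleton_ne {s s' : Fin (2*k+1)} (p : Fin (2*k+1)) (h : s' ≠ s) :
    pull k ({secIdx k s p} : Finset (Fin ((2*k+1)^2))) s' = ∅ := by
  ext q
  simp only [pull, Finset.mem_filter, Finset.mem_univ, true_and, Finset.mem_singleton,
    Finset.notMem_empty, iff_false]
  intro hq
  exact h (secIdx_inj hq).1

lemma pat_witness {i : ℕ} (h : i ≤ k) : pat k i ⟨2*i, by omega⟩ = true := by
  unfold pat
  split
  · simp
  · simp only [decide_eq_true_eq]; omega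

lemma pat_true_inj {i₁ i₂ : ℕ} (h₁ : i₁ ≤ k) (h₂ : i₂ ≤ k) {p : Fin (2*k+1)}
    (hp₁ : pat k i₁ p = true) (hp₂ : pat k i₂ p = true) : i₁ = i₂ := by
  unfold pat at hp₁ hp₂
  split at hp₁ <;> split at hp₂ <;>
    simp only [decide_eq_true_eq] at hp₁ hp₂ <;> omega

lemma pat_diff {i i' : ℕ} (hi : i < k) (hi' : i' ≤ k) (hne : i ≠ i') :
    (pat k i ⟨2*i, by omega⟩ ≠ pat k i' ⟨2*i, by omega⟩) ∧
    (pat k i ⟨2*i+1, by omega⟩ ≠ pat k i' ⟨2*i+1, by omega⟩) := by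
  constructor
  · unfold pat
    simp only [if_pos hi]
    split <;> simp only [Fin.val_mk, ne_eq, decide_eq_decide] <;>
      · intro hiff
        have := hiff.mp (Or.inl trivial)
        omega
  · unfold pat
    simp only [if_pos hi]
    split <;> simp only [Fin.val_mk, ne_eq, decide_eq_decide] <;>
      · intro hiff
        have := hiff.mp (Or.inr trivial)
        omega

lemma pat_diff2k {i i' : ℕ} (hi : i < k) (hi' : i' = k) :
    pat k i ⟨2*k, by omega⟩ ≠ pat k i' ⟨2*k, by omega⟩ := by
  unfold pat
  simp only [if_pos hi, hi', Nat.lt_irrefl, if_false, Fin.val_mk, ne_eq, decide_eq_decide]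
  intro hiff
  have := hiff.mpr trivial
  omega

lemma pat_eq_of_close {i₁ i₂ : ℕ} (h₁ : i₁ ≤ k) (h₂ : i₂ ≤ k) (p q : Fin (2*k+1))
    (h : ∀ j, j ≠ p → j ≠ q → pat k i₁ j = pat k i₂ j) : i₁ = i₂ := by
  by_contra hne
  have key : ∀ (a : Fin (2*k+1)), pat k i₁ a ≠ pat k i₂ a → a.val = p.val ∨ a.val = q.val := by
    intro a ha
    by_contra hc
    push_neg at hc
    exact ha (h a (fun e => hc.1 (congrArg Fin.val e)) (fun e => hc.2 (congrArg Fin.val e)))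
  rcases Nat.lt_or_ge i₁ k with hk₁ | hk₁
  · rcases Nat.lt_or_ge i₂ k with hk₂ | hk₂
    · obtain ⟨d1, d2⟩ := pat_diff hk₁ h₂ hne
      obtain ⟨d3, d4⟩ := pat_diff hk₂ h₁ (Ne.symm hne)
      have k1 := key _ d1
      have k2 := key _ d2
      have k3 := key _ (fun e => d3 e.symm)
      have k4 := key _ (fun e => d4 e.symm)
      simp only at k1 k2 k3 k4
      omega
    · have hik : i₂ = k := le_antisymm h₂ hk₂
      obtain ⟨d1, d2⟩ := pat_diff hk₁ h₂ hne
      have d3 := pat_diff2k hk₁ hik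
      have k1 := key _ d1
      have k2 := key _ d2
      have k3 := key _ d3
      simp only at k1 k2 k3
      omega
  · have hik : i₁ = k := le_antisymm h₁ hk₁
    rcases Nat.lt_or_ge i₂ k with hk₂ | hk₂
    · obtain ⟨d1, d2⟩ := pat_diff hk₂ h₁ (Ne.symm hne)
      have d3 := pat_diff2k hk₂ hik
      have k1 := key _ (fun e => d1 e.symm)
      have k2 := key _ (fun e => d2 e.symm)
      have k3 := key _ (fun e => d3 e.symm)
      simp only at k1 k2 k3
      omega
    · exact hne (by omega)

lemma not_good_false : ¬ goodSection k (fun _ : Fin (2*k+1) => false) := by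
  rw [goodSection_iff]
  rintro ⟨i, hi, hx⟩
  have := congrFun hx ⟨2*i, by omega⟩
  rw [pat_witness hi] at this
  exact Bool.false_ne_true this


lemma exists_secIdx (i : Fin ((2*k+1)^2)) : ∃ s p, i = secIdx k s p :=
  ⟨secOf k i, posOf k i, (secIdx_secOf i).symm⟩

lemma secOf_secIdx (s p : Fin (2*k+1)) :
    secOf k (secIdx k s p) = s ∧ posOf k (secIdx k s p) = p :=
  secIdx_inj (secIdx_secOf _)

lemma sectionOf_flip_single_self (w : Fin ((2*k+1)^2) → Bool) (s p : Fin (2*k+1)) :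
    sectionOf k (flipS w {secIdx k s p}) s = flipS (sectionOf k w s) {p} := by
  rw [sectionOf_flipS, pull_singleton_self]

lemma sectionOf_flip_single_ne (w : Fin ((2*k+1)^2) → Bool) {s s' : Fin (2*k+1)}
    (p : Fin (2*k+1)) (h : s' ≠ s) :
    sectionOf k (flipS w {secIdx k s p}) s' = sectionOf k w s' := by
  rw [sectionOf_flipS, pull_singleton_ne p h, flipS_empty]

lemma sensAt_le (w : Fin ((2*k+1)^2) → Bool) : sensAt (goodF k) w ≤ 2*k+1 := by
  classical
  rw [sensAt]
  have hcard : (Finset.univ : Finset (Fin (2*k+1))).card = 2*k+1 := by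
    simp
  cases hf : goodF k w with
  | true =>
    obtain ⟨t, ht⟩ := (goodF_true_iff w).1 hf
    have hsec : ∀ i ∈ Finset.univ.filter
        (fun i => goodF k (flipS w {i}) ≠ true), secOf k i = t := by
      intro i hi
      simp only [Finset.mem_filter, Finset.mem_univ, true_and] at hi
      by_contra hne
      apply hi
      rw [goodF_true_iff]
      refine ⟨t, ?_⟩
      obtain ⟨s, p, rfl⟩ := exists_secIdx i
      rw [(secOf_secIdx s p).1] at hne
      rw [sectionOf_flip_single_ne w p (Ne.symm hne)]
      exact ht
    refine le_trans (Finset.card_le_card_of_injOn (fun i => posOf k i) ?_ ?_) (le_of_eq hcard)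
    · intro a _; exact Finset.mem_univ _
    · intro i₁ h₁ i₂ h₂ hpos
      have hs₁ := hsec i₁ h₁
      have hs₂ := hsec i₂ h₂
      simp only at hpos
      calc i₁ = secIdx k (secOf k i₁) (posOf k i₁) := (secIdx_secOf i₁).symm
      _ = secIdx k (secOf k i₂) (posOf k i₂) := by rw [hs₁, hs₂, hpos]
      _ = i₂ := secIdx_secOf i₂
  | false =>
    have hall := (goodF_false_iff w).1 hf
    have hkey : ∀ i ∈ Finset.univ.filter
        (fun i => goodF k (flipS w {i}) ≠ false),
        ∃ a ≤ k, flipS (sectionOf k w (secOf k i)) {posOf k i} = pat k a := by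
      intro i hi
      simp only [Finset.mem_filter, Finset.mem_univ, true_and] at hi
      have hi' : goodF k (flipS w {i}) = true := by
        cases h : goodF k (flipS w {i})
        · exact absurd h hi
        · rfl
      obtain ⟨s', hs'⟩ := (goodF_true_iff _).1 hi'
      obtain ⟨s, p, rfl⟩ := exists_secIdx i
      rw [(secOf_secIdx s p).1, (secOf_secIdx s p).2]
      have hss : s' = s := by
        by_contra hne
        rw [sectionOf_flip_single_ne w p hne] at hs'
        exact hall s' hs'
      rw [hss, sectionOf_flip_single_self] at hs'
      exact (goodSection_iff _).1 hs'
    refine le_trans (Finset.card_le_card_of_injOn (fun i => secOf k i) ?_ ?_) (le_of_eq hcard)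
    · intro a _; exact Finset.mem_univ _
    · intro i₁ h₁ i₂ h₂ hsec
      simp only at hsec
      obtain ⟨a, ha, hfa⟩ := hkey i₁ h₁
      obtain ⟨b, hb, hfb⟩ := hkey i₂ h₂
      rw [hsec] at hfa
      set x := sectionOf k w (secOf k i₂) with hx
      have hTa := flip_eq_pat hfa
      have hTb := flip_eq_pat hfb
      by_cases hpq : posOf k i₁ = posOf k i₂
      · calc i₁ = secIdx k (secOf k i₁) (posOf k i₁) := (secIdx_secOf i₁).symm
        _ = secIdx k (secOf k i₂) (posOf k i₂) := by rw [hsec, hpq]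
        _ = i₂ := secIdx_secOf i₂
      · exfalso
        have hab : a = b := by
          apply pat_eq_of_close ha hb (posOf k i₁) (posOf k i₂)
          intro j hj₁ hj₂
          have hja : x j = pat k a j := by
            by_contra hc
            have : j ∈ ({posOf k i₁} : Finset (Fin (2*k+1))) := by
              rw [hTa]
              simp [hc]
            exact hj₁ (Finset.mem_singleton.1 this)
          have hjb : x j = pat k b j := by
            by_contra hc
            have : j ∈ ({posOf k i₂} : Finset (Fin (2*k+1))) := by
              rw [hTb]
              simp [hc]
            exact hj₂ (Finset.mem_singleton.1 this)
          rw [← hja, hjb]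
        rw [hab, ← hTb] at hTa
        exact hpq (Finset.singleton_injective hTa)


def w0 (k : ℕ) : Fin ((2*k+1)^2) → Bool :=
  fun i => decide (i = secIdx k ⟨0, by omega⟩ ⟨2*k, by omega⟩)

lemma sectionOf_w0_zero : sectionOf k (w0 k) ⟨0, by omega⟩ = pat k k := by
  funext p
  simp only [sectionOf, w0, pat, Nat.lt_irrefl, if_false]
  rw [decide_eq_decide]
  constructor
  · intro h
    exact congrArg Fin.val (secIdx_inj h).2
  · intro h
    congr 1
    exact Fin.ext h

lemma sectionOf_w0_ne {s : Fin (2*k+1)} (h : s ≠ ⟨0, by omega⟩) :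
    sectionOf k (w0 k) s = fun _ => false := by
  funext p
  simp only [sectionOf, w0]
  rw [decide_eq_false_iff_not]
  intro heq
  exact h (secIdx_inj heq).1

lemma goodF_w0 : goodF k (w0 k) = true := by
  rw [goodF_true_iff]
  exact ⟨⟨0, by omega⟩, (goodSection_iff _).2 ⟨k, le_refl k, sectionOf_w0_zero⟩⟩

lemma not_good_flip_patk (p : Fin (2*k+1)) : ¬ goodSection k (flipS (pat k k) {p}) := by
  rw [goodSection_iff]
  rintro ⟨i', hi', hpat⟩
  have hT := flip_eq_pat hpat
  rcases Nat.lt_or_ge i' k with hlt | hge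
  · obtain ⟨d1, d2⟩ := pat_diff hlt (le_refl k) (Nat.ne_of_lt hlt)
    have m1 : (⟨2*i', by omega⟩ : Fin (2*k+1)) ∈ ({p} : Finset (Fin (2*k+1))) := by
      rw [hT]
      simp only [Finset.mem_filter, Finset.mem_univ, true_and]
      exact fun e => d1 e.symm
    have m2 : (⟨2*i'+1, by omega⟩ : Fin (2*k+1)) ∈ ({p} : Finset (Fin (2*k+1))) := by
      rw [hT]
      simp only [Finset.mem_filter, Finset.mem_univ, true_and]
      exact fun e => d2 e.symm
    rw [Finset.mem_singleton] at m1 m2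
    have := congrArg Fin.val (m1.trans m2.symm)
    simp only [Fin.val_mk] at this
    omega
  · have hik : i' = k := le_antisymm hi' hge
    rw [hik] at hT
    have : p ∈ ({p} : Finset (Fin (2*k+1))) := Finset.mem_singleton_self p
    rw [hT] at this
    simp at this

lemma goodF_w0_flip (p : Fin (2*k+1)) :
    goodF k (flipS (w0 k) {secIdx k ⟨0, by omega⟩ p}) = false := by
  rw [goodF_false_iff]
  intro s
  by_cases hs : s = ⟨0, by omega⟩
  · subst hs
    rw [sectionOf_flip_single_self, sectionOf_w0_zero]
    exact not_good_flip_patk p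
  · rw [sectionOf_flip_single_ne _ p hs, sectionOf_w0_ne hs]
    exact not_good_false

lemma sensAt_w0_ge : 2*k+1 ≤ sensAt (goodF k) (w0 k) := by
  classical
  rw [sensAt]
  have hsub : (Finset.univ.image (fun p : Fin (2*k+1) => secIdx k ⟨0, by omega⟩ p)) ⊆
      Finset.univ.filter (fun i => goodF k (flipS (w0 k) {i}) ≠ goodF k (w0 k)) := by
    intro i hi
    simp only [Finset.mem_image, Finset.mem_univ, true_and] at hi
    obtain ⟨p, rfl⟩ := hi
    simp only [Finset.mem_filter, Finset.mem_univ, true_and]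
    rw [goodF_w0, goodF_w0_flip p]
    simp
  have hcard : (Finset.univ.image (fun p : Fin (2*k+1) => secIdx k ⟨0, by omega⟩ p)).card
      = 2*k+1 := by
    rw [Finset.card_image_of_injective _ (fun p q h => (secIdx_inj h).2)]
    simp
  exact le_trans (le_of_eq hcard.symm) (Finset.card_le_card hsub)

lemma sens_goodF : sens (goodF k) = 2*k+1 := by
  apply le_antisymm
  · exact Finset.sup_le (fun w _ => sensAt_le w)
  · exact le_trans sensAt_w0_ge (Finset.le_sup (Finset.mem_univ (w0 k)))


lemma pull_disjoint {S S' : Finset (Fin ((2*k+1)^2))} (h : Disjoint S S') (s : Fin (2*k+1)) :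
    Disjoint (pull k S s) (pull k S' s) := by
  rw [Finset.disjoint_left] at h ⊢
  intro p hp hp'
  simp only [pull, Finset.mem_filter, Finset.mem_univ, true_and] at hp hp'
  exact h hp hp'

lemma bs_mem_le {w : Fin ((2*k+1)^2) → Bool} {m : ℕ}
    (hm : m ∈ {m | ∃ B : Fin m → Finset (Fin ((2*k+1)^2)), (∀ j, (B j).Nonempty) ∧
      (∀ j₁ j₂, j₁ ≠ j₂ → Disjoint (B j₁) (B j₂)) ∧
      (∀ j, goodF k (flipS w (B j)) ≠ goodF k w)}) :
    m ≤ (2*k+1)*(k+1) := by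
  classical
  obtain ⟨B, hBne, hdis, hflip⟩ := hm
  cases hf : goodF k w with
  | true =>
    have hjf : ∀ j, goodF k (flipS w (B j)) = false := by
      intro j
      have := hflip j
      rw [hf] at this
      cases h : goodF k (flipS w (B j))
      · rfl
      · exact absurd h this
    obtain ⟨t, ht⟩ := (goodF_true_iff w).1 hf
    have hpull : ∀ j, (pull k (B j) t).Nonempty := by
      intro j
      by_contra h
      rw [Finset.not_nonempty_iff_eq_empty] at h
      have hsec : sectionOf k (flipS w (B j)) t = sectionOf k w t := by
        rw [sectionOf_flipS, h, flipS_empty]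
      have := (goodF_false_iff _).1 (hjf j) t
      rw [hsec] at this
      exact this ht
    choose c hc using hpull
    have hinj : Function.Injective c := by
      intro j₁ j₂ he
      by_contra hne
      have hd := pull_disjoint (hdis j₁ j₂ hne) t
      rw [Finset.disjoint_left] at hd
      exact hd (hc j₁) (he ▸ hc j₂)
    have := Fintype.card_le_of_injective c hinj
    simp only [Fintype.card_fin] at this
    calc m ≤ 2*k+1 := this
    _ = (2*k+1)*1 := (Nat.mul_one _).symm
    _ ≤ (2*k+1)*(k+1) := Nat.mul_le_mul_left _ (by omega)
  | false =>
    have hall := (goodF_false_iff w).1 hf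
    have hjt : ∀ j, goodF k (flipS w (B j)) = true := by
      intro j
      have := hflip j
      rw [hf] at this
      cases h : goodF k (flipS w (B j))
      · exact absurd h this
      · rfl
    have key : ∀ j, ∃ (s : Fin (2*k+1)) (a : ℕ), a ≤ k ∧
        flipS (sectionOf k w s) (pull k (B j) s) = pat k a ∧ (pull k (B j) s).Nonempty := by
      intro j
      obtain ⟨s, hs⟩ := (goodF_true_iff _).1 (hjt j)
      rw [sectionOf_flipS] at hs
      obtain ⟨a, ha, hpa⟩ := (goodSection_iff _).1 hs
      refine ⟨s, a, ha, hpa, ?_⟩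
      by_contra h
      rw [Finset.not_nonempty_iff_eq_empty] at h
      rw [h, flipS_empty] at hpa
      exact hall s ((goodSection_iff _).2 ⟨a, ha, hpa⟩)
    choose s a hak hpat hpne using key
    have hinj : Function.Injective
        (fun j => ((s j, ⟨a j, by have := hak j; omega⟩) : Fin (2*k+1) × Fin (k+1))) := by
      intro j₁ j₂ he
      by_contra hne
      simp only [Prod.mk.injEq, Fin.mk.injEq] at he
      obtain ⟨hs, ha⟩ := he
      have h1 := flip_eq_pat (hpat j₁)
      have h2 := flip_eq_pat (hpat j₂)
      rw [hs, ha] at h1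
      rw [← h2] at h1
      have hd := pull_disjoint (hdis j₁ j₂ hne) (s j₂)
      rw [Finset.disjoint_left] at hd
      obtain ⟨p, hp⟩ := hpne j₂
      exact hd (h1 ▸ hp) hp
    have := Fintype.card_le_of_injective _ hinj
    simp only [Fintype.card_prod, Fintype.card_fin] at this
    calc m ≤ (2*k+1)*(k+1) := this

lemma zero_mem_bsSet (f : (Fin ((2*k+1)^2) → Bool) → Bool) (w : Fin ((2*k+1)^2) → Bool) :
    0 ∈ {m | ∃ B : Fin m → Finset (Fin ((2*k+1)^2)), (∀ j, (B j).Nonempty) ∧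
      (∀ j₁ j₂, j₁ ≠ j₂ → Disjoint (B j₁) (B j₂)) ∧
      (∀ j, f (flipS w (B j)) ≠ f w)} :=
  ⟨Fin.elim0, fun j => j.elim0, fun j => j.elim0, fun j => j.elim0⟩

lemma bsAt_le (w : Fin ((2*k+1)^2) → Bool) : bsAt (goodF k) w ≤ (2*k+1)*(k+1) := by
  rw [bsAt]
  exact csSup_le ⟨0, zero_mem_bsSet _ w⟩ (fun m hm => bs_mem_le hm)


def support (k i : ℕ) : Finset (Fin (2*k+1)) :=
  Finset.univ.filter (fun p => pat k i p = true)

lemma flip_false_support (i : ℕ) :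
    flipS (fun _ : Fin (2*k+1) => false) (support k i) = pat k i := by
  funext p
  simp only [flipS, support, Finset.mem_filter, Finset.mem_univ, true_and]
  by_cases h : pat k i p = true <;> simp [h]

lemma sectionOf_false (s : Fin (2*k+1)) :
    sectionOf k (fun _ : Fin ((2*k+1)^2) => false) s = fun _ => false := rfl

lemma goodF_false_input : goodF k (fun _ => false) = false := by
  rw [goodF_false_iff]
  intro s
  exact not_good_false

lemma pull_image (s' : Fin (2*k+1)) (T : Finset (Fin (2*k+1))) (s : Fin (2*k+1)) :
    pull k (T.image (secIdx k s')) s = if s = s' then T else ∅ := by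
  ext p
  simp only [pull, Finset.mem_filter, Finset.mem_univ, true_and, Finset.mem_image]
  by_cases hss : s = s'
  · subst hss
    simp only [if_pos rfl]
    constructor
    · rintro ⟨q, hq, heq⟩
      rwa [(secIdx_inj heq).2] at hq
    · intro hp
      exact ⟨p, hp, rfl⟩
  · simp only [if_neg hss, Finset.notMem_empty, iff_false]
    rintro ⟨q, hq, heq⟩
    exact hss (secIdx_inj heq).1.symm

def sjf (k : ℕ) (j : Fin ((2*k+1)*(k+1))) : Fin (2*k+1) :=
  ⟨j.val / (k+1), by
    apply Nat.div_lt_of_lt_mul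
    have h := j.isLt
    calc j.val < (2*k+1)*(k+1) := h
    _ = (k+1)*(2*k+1) := Nat.mul_comm _ _⟩

def Bl (k : ℕ) (j : Fin ((2*k+1)*(k+1))) : Finset (Fin ((2*k+1)^2)) :=
  (support k (j.val % (k+1))).image (secIdx k (sjf k j))

lemma mod_le_k (j : Fin ((2*k+1)*(k+1))) : j.val % (k+1) ≤ k := by
  have := Nat.mod_lt j.val (show 0 < k+1 by omega)
  omega

lemma bsLower_mem : (2*k+1)*(k+1) ∈ {m | ∃ B : Fin m → Finset (Fin ((2*k+1)^2)),
    (∀ j, (B j).Nonempty) ∧ (∀ j₁ j₂, j₁ ≠ j₂ → Disjoint (B j₁) (B j₂)) ∧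
    (∀ j, goodF k (flipS (fun _ => false) (B j)) ≠ goodF k (fun _ => false))} := by
  refine ⟨Bl k, ?_, ?_, ?_⟩
  · intro j
    refine ⟨secIdx k (sjf k j) ⟨2*(j.val % (k+1)), by have := mod_le_k j; omega⟩, ?_⟩
    apply Finset.mem_image_of_mem
    simp only [support, Finset.mem_filter, Finset.mem_univ, true_and]
    exact pat_witness (mod_le_k j)
  · intro j₁ j₂ hne
    rw [Finset.disjoint_left]
    rintro x hx₁ hx₂
    simp only [Bl, Finset.mem_image, support, Finset.mem_filter, Finset.mem_univ,
      true_and] at hx₁ hx₂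
    obtain ⟨q₁, hq₁, he₁⟩ := hx₁
    obtain ⟨q₂, hq₂, he₂⟩ := hx₂
    rw [← he₂] at he₁
    obtain ⟨hs, hq⟩ := secIdx_inj he₁
    rw [hq] at hq₁
    have ha : j₁.val % (k+1) = j₂.val % (k+1) :=
      pat_true_inj (mod_le_k j₁) (mod_le_k j₂) hq₁ hq₂
    have hd : j₁.val / (k+1) = j₂.val / (k+1) := congrArg Fin.val hs
    apply hne
    apply Fin.ext
    rw [← Nat.div_add_mod j₁.val (k+1), ← Nat.div_add_mod j₂.val (k+1), ha, hd]
  · intro j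
    rw [goodF_false_input]
    have : goodF k (flipS (fun _ => false) (Bl k j)) = true := by
      rw [goodF_true_iff]
      refine ⟨sjf k j, ?_⟩
      rw [sectionOf_flipS, sectionOf_false]
      rw [show pull k (Bl k j) (sjf k j) = support k (j.val % (k+1)) from by
        rw [Bl, pull_image, if_pos rfl]]
      rw [flip_false_support]
      exact (goodSection_iff _).2 ⟨j.val % (k+1), mod_le_k j, rfl⟩
    rw [this]
    simp

lemma bsAt_ge : (2*k+1)*(k+1) ≤ bsAt (goodF k) (fun _ => false) := by
  rw [bsAt]
  exact le_csSup ⟨(2*k+1)*(k+1), fun m hm => bs_mem_le hm⟩ bsLower_mem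

lemma bs_goodF : bs (goodF k) = (2*k+1)*(k+1) := by
  apply le_antisymm
  · exact Finset.sup_le (fun w _ => bsAt_le w)
  · exact le_trans bsAt_ge (Finset.le_sup (Finset.mem_univ (fun _ => false)))

end Stmt13

theorem stmt13 :
    ∃ F : (k : ℕ) → (Fin ((2*k+1)^2) → Bool) → Bool,
      Filter.Tendsto (fun k => sens (F k)) Filter.atTop Filter.atTop ∧
      ∀ k, (bs (F k) : ℚ) = (1/2) * (sens (F k))^2 + (1/2) * (sens (F k)) := by
  refine ⟨fun k => goodF k, ?_, ?_⟩
  · have h : ∀ k : ℕ, sens (goodF k) = 2*k+1 := fun k => Stmt13.sens_goodF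
    simp only [h]
    exact Filter.tendsto_atTop_mono (fun k => (by omega : k ≤ 2*k+1)) Filter.tendsto_id
  · intro k
    rw [Stmt13.bs_goodF, Stmt13.sens_goodF]
    push_cast
    ring
end

section
/- Let k ≥ 0 and let f be the 'good sections' function on n = (2k+1)^2 variables. On the all-zeros input, the (2k+1)(k+1) blocks consisting of, for each of the 2k+1 sections, the k pairs {x_{2i-1}, x_{2i}} (1 ≤ i ≤ k) and the singleton {x_{2k+1}}, are pairwise disjoint and each flips the value of f. Hence bs(f, 0…0) ≥ (2k+1)(k+1). -/
def zeroBlock (k : ℕ) (s : Fin (2*k+1)) (i : Fin (k+1)) : Finset (Fin ((2*k+1)^2)) :=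
  if h : i.val < k then
    {secIdx k s ⟨2*i.val, by omega⟩, secIdx k s ⟨2*i.val+1, by omega⟩}
  else
    {secIdx k s ⟨2*k, by omega⟩}

lemma mem_zeroBlock {k : ℕ} (s : Fin (2*k+1)) (i : Fin (k+1)) (s' p : Fin (2*k+1)) :
    secIdx k s' p ∈ zeroBlock k s i ↔
      s' = s ∧ ((i.val < k ∧ (p.val = 2*i.val ∨ p.val = 2*i.val+1)) ∨
                (i.val = k ∧ p.val = 2*k)) := by
  unfold zeroBlock
  by_cases h : i.val < k
  · simp only [dif_pos h, Finset.mem_insert, Finset.mem_singleton]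
    constructor
    · rintro (he | he) <;> obtain ⟨h1, h2⟩ := secIdx_inj he <;>
        simp [h1, h, congrArg Fin.val h2]
    · rintro ⟨rfl, (⟨-, (hp | hp)⟩ | ⟨hk, -⟩)⟩
      · left; congr 1; exact Fin.ext hp
      · right; congr 1; exact Fin.ext hp
      · omega
  · have hk : i.val = k := by omega
    simp only [dif_neg h, Finset.mem_singleton]
    constructor
    · intro he; obtain ⟨h1, h2⟩ := secIdx_inj he
      exact ⟨h1, Or.inr ⟨hk, congrArg Fin.val h2⟩⟩
    · rintro ⟨rfl, (⟨hik, -⟩ | ⟨-, hp⟩)⟩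
      · omega
      · congr 1; exact Fin.ext hp

lemma goodF_zero (k : ℕ) : goodF k (fun _ => false) = false := by
  simp only [goodF, decide_eq_false_iff_not]
  rintro ⟨s, (⟨i, hi, hall⟩ | hall)⟩
  · have := hall ⟨2*i, by omega⟩
    simp [sectionOf] at this
  · have := hall ⟨2*k, by omega⟩
    simp [sectionOf] at this

lemma goodF_flip (k : ℕ) (s : Fin (2*k+1)) (i : Fin (k+1)) :
    goodF k (flipS (fun _ => false) (zeroBlock k s i)) = true := by
  simp only [goodF, decide_eq_true_eq]
  refine ⟨s, ?_⟩
  have hsec : ∀ p, sectionOf k (flipS (fun _ => false) (zeroBlock k s i)) s p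
      = decide (secIdx k s p ∈ zeroBlock k s i) := by
    intro p
    simp only [sectionOf, flipS]
    by_cases hmem : secIdx k s p ∈ zeroBlock k s i <;> simp [hmem]
  by_cases h : i.val < k
  · left
    refine ⟨i.val, h, fun j => ?_⟩
    rw [hsec j, decide_eq_decide, mem_zeroBlock]
    constructor
    · rintro ⟨-, (⟨-, hp⟩ | ⟨hk, -⟩)⟩; exact hp; omega
    · intro hp; exact ⟨rfl, Or.inl ⟨h, hp⟩⟩
  · right
    intro j
    rw [hsec j, decide_eq_decide, mem_zeroBlock]
    constructor
    · rintro ⟨-, (⟨hik, -⟩ | ⟨-, hp⟩)⟩; omega; exact hp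
    · intro hp; exact ⟨rfl, Or.inr ⟨by omega, hp⟩⟩

lemma zeroBlock_nonempty (k : ℕ) (s : Fin (2*k+1)) (i : Fin (k+1)) :
    (zeroBlock k s i).Nonempty := by
  unfold zeroBlock
  by_cases h : i.val < k <;> simp [h]

lemma zeroBlock_disjoint (k : ℕ) : ∀ p q : Fin (2*k+1) × Fin (k+1), p ≠ q →
    Disjoint (zeroBlock k p.1 p.2) (zeroBlock k q.1 q.2) := by
  rintro ⟨s, i⟩ ⟨s', i'⟩ hne
  rw [Finset.disjoint_left]
  intro a ha ha'
  have h1 : ∃ p : Fin (2*k+1), a = secIdx k s p := by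
    unfold zeroBlock at ha
    by_cases h : i.val < k
    · simp only [dif_pos h, Finset.mem_insert, Finset.mem_singleton] at ha
      rcases ha with h | h <;> exact ⟨_, h⟩
    · simp only [dif_neg h, Finset.mem_singleton] at ha
      exact ⟨_, ha⟩
  obtain ⟨p, rfl⟩ := h1
  rw [mem_zeroBlock] at ha ha'
  obtain ⟨-, hc⟩ := ha
  obtain ⟨hs, hc'⟩ := ha'
  have hii : i = i' := by
    apply Fin.ext
    dsimp only at hc hc'
    rcases hc with ⟨h1, h2 | h2⟩ | ⟨h1, h2⟩ <;>
      rcases hc' with ⟨g1, g2 | g2⟩ | ⟨g1, g2⟩ <;> omega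
  exact hne (by rw [hs, hii])

lemma bsAt_bddAbove {n : ℕ} (f : (Fin n → Bool) → Bool) (w : Fin n → Bool) :
    BddAbove {m | ∃ B : Fin m → Finset (Fin n), (∀ j, (B j).Nonempty) ∧
      (∀ j₁ j₂, j₁ ≠ j₂ → Disjoint (B j₁) (B j₂)) ∧ (∀ j, f (flipS w (B j)) ≠ f w)} := by
  refine ⟨n, ?_⟩
  rintro m ⟨B, hne, hdisj, -⟩
  choose g hg using fun j => hne j
  have hinj : Function.Injective g := by
    intro j₁ j₂ h
    by_contra hne'
    exact Finset.disjoint_left.mp (hdisj j₁ j₂ hne') (hg j₁) (h ▸ hg j₂)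
  simpa using Fintype.card_le_of_injective g hinj

theorem stmt14 (k : ℕ) :
    (∀ p q : Fin (2*k+1) × Fin (k+1), p ≠ q →
      Disjoint (zeroBlock k p.1 p.2) (zeroBlock k q.1 q.2)) ∧
    (∀ p : Fin (2*k+1) × Fin (k+1),
      goodF k (flipS (fun _ => false) (zeroBlock k p.1 p.2)) ≠ goodF k (fun _ => false)) ∧
    (2*k+1)*(k+1) ≤ bsAt (goodF k) (fun _ => false) := by
  have hd := zeroBlock_disjoint k
  have hflip : ∀ p : Fin (2*k+1) × Fin (k+1),
      goodF k (flipS (fun _ => false) (zeroBlock k p.1 p.2)) ≠ goodF k (fun _ => false) := by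
    intro p
    rw [goodF_flip k p.1 p.2, goodF_zero k]
    simp
  refine ⟨hd, hflip, ?_⟩
  apply le_csSup (bsAt_bddAbove _ _)
  refine ⟨fun j => zeroBlock k (finProdFinEquiv.symm j).1 (finProdFinEquiv.symm j).2,
    fun j => zeroBlock_nonempty _ _ _, fun j₁ j₂ hne => ?_, fun j => hflip _⟩
  exact hd _ _ (fun h => hne (finProdFinEquiv.symm.injective (Prod.ext (congrArg Prod.fst h) (congrArg Prod.snd h))))
end

section
/- For n = 4 there exists a Boolean function f on 4 variables with s(f) = 2 and bs(f) = 3. -/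
def myF : (Fin 4 → Bool) → Bool := fun w =>
  decide ((w 0, w 1, w 2, w 3) ∈ [(false,false,true,true),(false,true,false,false),
    (false,true,true,false),(false,true,true,true),(true,false,false,false),
    (true,false,false,true),(true,false,true,true),(true,true,false,false)])

def bsSet {n : ℕ} (f : (Fin n → Bool) → Bool) (w : Fin n → Bool) : Set ℕ :=
  {k | ∃ B : Fin k → Finset (Fin n), (∀ j, (B j).Nonempty) ∧
    (∀ j₁ j₂, j₁ ≠ j₂ → Disjoint (B j₁) (B j₂)) ∧ (∀ j, f (flipS w (B j)) ≠ f w)}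

lemma bsSet_down {n : ℕ} (f : (Fin n → Bool) → Bool) (w : Fin n → Bool)
    {k k' : ℕ} (h : k' ≤ k) (hk : k ∈ bsSet f w) : k' ∈ bsSet f w := by
  obtain ⟨B, h1, h2, h3⟩ := hk
  exact ⟨fun j => B (Fin.castLE h j), fun j => h1 _,
    fun j₁ j₂ hne => h2 _ _ (fun e => hne (Fin.castLE_injective h e)), fun j => h3 _⟩

lemma zero_mem {n : ℕ} (f : (Fin n → Bool) → Bool) (w : Fin n → Bool) :
    0 ∈ bsSet f w := ⟨Fin.elim0, fun j => j.elim0, fun j => j.elim0, fun j => j.elim0⟩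

lemma sens_myF : sens myF = 2 := by decide

lemma not_four (w : Fin 4 → Bool) : 4 ∉ bsSet myF w := by
  rintro ⟨B, h1, h2, h3⟩
  have hcard : ∀ j, 1 ≤ (B j).card := fun j => Finset.card_pos.mpr (h1 j)
  have hsum : ∑ j : Fin 4, (B j).card ≤ 4 := by
    rw [← Finset.card_biUnion (fun j₁ _ j₂ _ h => h2 j₁ j₂ h)]
    calc (Finset.univ.biUnion B).card ≤ (Finset.univ : Finset (Fin 4)).card :=
          Finset.card_le_card (Finset.subset_univ _)
      _ = 4 := rfl
  have hone : ∀ j, (B j).card = 1 := by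
    intro j
    have hrest : ∑ j' ∈ Finset.univ.erase j, (B j').card ≥ 3 := by
      calc ∑ j' ∈ Finset.univ.erase j, (B j').card
          ≥ ∑ j' ∈ Finset.univ.erase j, 1 := Finset.sum_le_sum (fun j' _ => hcard j')
        _ = 3 := by simp
    have heq : (B j).card + ∑ j' ∈ Finset.univ.erase j, (B j').card = ∑ j' : Fin 4, (B j').card :=
      Finset.add_sum_erase Finset.univ (fun j' => (B j').card) (Finset.mem_univ j)
    have hcj := hcard j
    omega
  have hbi : Finset.univ.biUnion B = Finset.univ := by
    apply Finset.eq_univ_of_card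
    rw [Finset.card_biUnion (fun j₁ _ j₂ _ h => h2 j₁ j₂ h)]
    simp [hone]
  have hall : ∀ i : Fin 4, myF (flipS w {i}) ≠ myF w := by
    intro i
    have : i ∈ Finset.univ.biUnion B := by rw [hbi]; exact Finset.mem_univ i
    obtain ⟨j, _, hij⟩ := Finset.mem_biUnion.mp this
    obtain ⟨a, ha⟩ := Finset.card_eq_one.mp (hone j)
    have : B j = ({i} : Finset (Fin 4)) := by
      rw [ha] at hij ⊢; simpa using (Finset.mem_singleton.mp hij) ▸ rfl
    have h3j := h3 j
    rwa [this] at h3j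
  have h4 : sensAt myF w = 4 := by
    unfold sensAt
    rw [Finset.filter_true_of_mem (fun i _ => hall i)]
    rfl
  have hle : sensAt myF w ≤ sens myF := Finset.le_sup (Finset.mem_univ w)
  rw [h4, sens_myF] at hle
  omega

lemma three_mem : 3 ∈ bsSet myF (fun _ => false) := by
  refine ⟨![{0}, {1}, {2, 3}], ?_, ?_, ?_⟩
  · decide
  · decide
  · decide

lemma bdd (w : Fin 4 → Bool) : ∀ k ∈ bsSet myF w, k ≤ 3 := by
  intro k hk
  by_contra h
  exact not_four w (bsSet_down myF w (by omega) hk)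

lemma bsAt_le (w : Fin 4 → Bool) : bsAt myF w ≤ 3 :=
  csSup_le ⟨0, zero_mem myF w⟩ (bdd w)

lemma bsAt_ge : 3 ≤ bsAt myF (fun _ => false) :=
  le_csSup ⟨3, bdd _⟩ three_mem

theorem stmt19 : ∃ f : (Fin 4 → Bool) → Bool, sens f = 2 ∧ bs f = 3 := by
  refine ⟨myF, sens_myF, le_antisymm ?_ ?_⟩
  · exact Finset.sup_le (fun w _ => bsAt_le w)
  · exact le_trans bsAt_ge (Finset.le_sup (Finset.mem_univ _))
end
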